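/- arXiv:1009.5225 — 7 statements merged into one kernel-verified Lean document; each statement's English description precedes it below -/
import Mathlib

section
/- If f : I ⊆ ℝ → ℝ is twice differentiable on the interior of I, a, b ∈ I with a < b, m ∈ (0,1], a < m·b, and f'' is integrable on [a, mb], then (f(a)+f(mb))/2 − (1/(mb−a))·∫_a^{mb} f(x) dx = ((mb−a)²/2)·∫_0^1 (t − t²)·f''(t·a + m·(1−t)·b) dt. -/
open intervalIntegral MeasureTheory

theorem lemma_identity
    (f f' f'' : ℝ → ℝ) (a b m : ℝ) (hab : a < b) (hm : m ∈ Set.Ioc (0:ℝ) 1)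
    (hamb : a < m * b)
    (hf : ∀ x ∈ Set.Icc a (m * b), HasDerivAt f (f' x) x)
    (hf' : ∀ x ∈ Set.Icc a (m * b), HasDerivAt f' (f'' x) x)
    (hint : IntervalIntegrable f'' MeasureTheory.volume a (m * b)) :
    (f a + f (m * b)) / 2 - (1 / (m * b - a)) * ∫ x in a..(m * b), f x
      = ((m * b - a) ^ 2 / 2) *
        ∫ t in (0:ℝ)..1, (t - t ^ 2) * f'' (t * a + m * (1 - t) * b) := by
  set c := m * b with hc
  clear_value c
  have hac : a < c := hamb
  have hca : c - a ≠ 0 := sub_ne_zero.mpr hac.ne'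
  have huIcc : Set.uIcc a c = Set.Icc a c := Set.uIcc_of_le hac.le
  -- integration by parts, step 1
  have hu : ∀ x ∈ Set.uIcc a c, HasDerivAt (fun x => (x - a) * (c - x)) (a + c - 2 * x) x := by
    intro x _
    have h1 : HasDerivAt (fun x => (x - a) * (c - x)) (1 * (c - x) + (x - a) * (0 - 1)) x :=
      ((hasDerivAt_id x).sub_const a).mul ((hasDerivAt_const x c).sub (hasDerivAt_id x))
    convert h1 using 1; ring
  have hv : ∀ x ∈ Set.uIcc a c, HasDerivAt f' (f'' x) x := fun x hx => hf' x (huIcc ▸ hx)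
  have hucont : IntervalIntegrable (fun x => a + c - 2 * x) volume a c :=
    (continuous_const.sub (continuous_const.mul continuous_id)).intervalIntegrable a c
  have ibp1 : ∫ x in a..c, (x - a) * (c - x) * f'' x
      = - ∫ x in a..c, (a + c - 2 * x) * f' x := by
    rw [integral_mul_deriv_eq_deriv_mul hu hv hucont hint]
    simp
  -- integration by parts, step 2
  have hu2 : ∀ x ∈ Set.uIcc a c, HasDerivAt (fun x => a + c - 2 * x) (-2) x := by
    intro x _
    have h2 : HasDerivAt (fun x => a + c - 2 * x) (0 - 2 * 1) x :=
      (hasDerivAt_const x (a + c)).sub ((hasDerivAt_id x).const_mul 2)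
    convert h2 using 1; ring
  have hv2 : ∀ x ∈ Set.uIcc a c, HasDerivAt f (f' x) x := fun x hx => hf x (huIcc ▸ hx)
  have hf'int : IntervalIntegrable f' volume a c := by
    apply ContinuousOn.intervalIntegrable
    intro x hx
    exact (hv x hx).continuousAt.continuousWithinAt
  have ibp2 : ∫ x in a..c, (a + c - 2 * x) * f' x
      = (a - c) * f c - (c - a) * f a + 2 * ∫ x in a..c, f x := by
    rw [integral_mul_deriv_eq_deriv_mul hu2 hv2
      ((continuous_const).intervalIntegrable a c) hf'int]
    rw [intervalIntegral.integral_const_mul]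
    ring
  have key : ∫ x in a..c, (x - a) * (c - x) * f'' x
      = (c - a) * (f a + f c) - 2 * ∫ x in a..c, f x := by
    rw [ibp1, ibp2]; ring
  -- change of variables
  have hsub : ∫ t in (0:ℝ)..1, (t - t ^ 2) * f'' (t * a + m * (1 - t) * b)
      = ∫ t in (0:ℝ)..1, (fun x => (x - a) * (c - x) / (c - a) ^ 2 * f'' x) ((a - c) * t + c) := by
    apply intervalIntegral.integral_congr
    intro t _
    have harg : (a - c) * t + c = t * a + m * (1 - t) * b := by rw [hc]; ring
    simp only [harg]
    have : ((a - c) * t + c - a) * (c - ((a - c) * t + c)) / (c - a) ^ 2 = t - t ^ 2 := by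
      field_simp
      ring
    rw [harg] at this
    rw [this]
  have hsub2 : ∫ t in (0:ℝ)..1, (fun x => (x - a) * (c - x) / (c - a) ^ 2 * f'' x) ((a - c) * t + c)
      = (a - c)⁻¹ • ∫ x in c..a, (x - a) * (c - x) / (c - a) ^ 2 * f'' x := by
    rw [intervalIntegral.integral_comp_mul_add
      (fun x => (x - a) * (c - x) / (c - a) ^ 2 * f'' x) (sub_ne_zero.mpr hac.ne) c]
    norm_num
  have hpull : ∫ x in c..a, (x - a) * (c - x) / (c - a) ^ 2 * f'' x
      = - (1 / (c - a) ^ 2) * ∫ x in a..c, (x - a) * (c - x) * f'' x := by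
    rw [intervalIntegral.integral_symm]
    have : ∀ x, (x - a) * (c - x) / (c - a) ^ 2 * f'' x
        = (1 / (c - a) ^ 2) * ((x - a) * (c - x) * f'' x) := by
      intro x; field_simp
    simp_rw [this]
    rw [intervalIntegral.integral_const_mul]
    ring
  rw [hsub, hsub2, hpull, key, smul_eq_mul]
  generalize (∫ x in a..c, f x) = J
  generalize f a = A
  generalize f c = B
  have hinv : (a - c)⁻¹ = -(c - a)⁻¹ := by
    rw [← neg_sub c a, inv_neg]
  rw [hinv]
  field_simp [hca]
end

section
/- Let f : [0, b*] → ℝ be twice differentiable on an open interval containing [a, mb], with 0 ≤ a < b ≤ b*, m ∈ (0,1], a < mb, and f'' integrable on [a, mb]. If |f''|^q is (α,m)-convex on [a,b] for some (α,m) ∈ [0,1]×(0,1] and q ≥ 1, then |(f(a)+f(mb))/2 − (1/(mb−a))∫_a^{mb} f(x)dx| ≤ ((mb−a)²/2)·(1/6)^{1−1/q}·[ |f''(a)|^q/((α+2)(α+3)) + m|f''(b)|^q·(1/6 − 1/((α+2)(α+3))) ]^{1/q}. -/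
open MeasureTheory Set intervalIntegral Filter

lemma weight_integral (a c : ℝ) :
    ∫ x in a..c, (x - a) * (c - x) = (c - a) ^ 3 / 6 := by
  have hderiv : ∀ x ∈ Set.uIcc a c,
      HasDerivAt (fun y => -(y ^ 3) / 3 + (a + c) * y ^ 2 / 2 - a * c * y)
        ((x - a) * (c - x)) x := by
    intro x _
    have h1 : HasDerivAt (fun y : ℝ => y ^ 3) (3 * x ^ 2) x := by
      simpa using hasDerivAt_pow 3 x
    have h2 : HasDerivAt (fun y : ℝ => y ^ 2) (2 * x) x := by
      simpa using hasDerivAt_pow 2 x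
    have h3 : HasDerivAt (fun y : ℝ => a * c * y) (a * c) x := by
      simpa using (hasDerivAt_id x).const_mul (a * c)
    have h := ((h1.neg.div_const 3).add ((h2.const_mul (a + c)).div_const 2)).sub h3
    refine h.congr_deriv ?_
    ring
  rw [intervalIntegral.integral_eq_sub_of_hasDerivAt hderiv
    (Continuous.intervalIntegrable (by continuity) a c)]
  ring

lemma rpow_weight_integral (a c α : ℝ) (hac : a < c) (hα0 : 0 ≤ α) :
    ∫ x in a..c, (x - a) * (c - x) ^ (α + 1)
      = (c - a) ^ (α + 3) / ((α + 2) * (α + 3)) := by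
  have h2 : (0:ℝ) < α + 2 := by linarith
  have h3 : (0:ℝ) < α + 3 := by linarith
  set G : ℝ → ℝ := fun y => 1 / (α + 3) * (c - y) ^ (α + 3)
      - (c - a) / (α + 2) * (c - y) ^ (α + 2) with hG
  have hderiv : ∀ x ∈ Set.uIcc a c, HasDerivAt G ((x - a) * (c - x) ^ (α + 1)) x := by
    intro x hx
    rw [Set.uIcc_of_le hac.le] at hx
    have hcx : 0 ≤ c - x := by linarith [hx.2]
    have hbase : HasDerivAt (fun y : ℝ => c - y) (-1) x := by
      simpa using (hasDerivAt_id x).const_sub c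
    have hp2 : HasDerivAt (fun y : ℝ => (c - y) ^ (α + 2))
        ((α + 2) * (c - x) ^ (α + 1) * (-1)) x := by
      have h := (Real.hasDerivAt_rpow_const (x := c - x) (p := α + 2)
        (Or.inr (by linarith))).comp x hbase
      simpa [Function.comp_def, show α + 2 - 1 = α + 1 by ring] using h
    have hp3 : HasDerivAt (fun y : ℝ => (c - y) ^ (α + 3))
        ((α + 3) * (c - x) ^ (α + 2) * (-1)) x := by
      have h := (Real.hasDerivAt_rpow_const (x := c - x) (p := α + 3)
        (Or.inr (by linarith))).comp x hbase
      simpa [Function.comp_def, show α + 3 - 1 = α + 2 by ring] using h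
    have h := ((hp3.const_mul (1 / (α + 3))).sub (hp2.const_mul ((c - a) / (α + 2))))
    refine h.congr_deriv ?_
    have e1 : (c - x) ^ (α + 2) = (c - x) ^ (α + 1) * (c - x) := by
      rw [show α + 2 = (α + 1) + 1 by ring, Real.rpow_add' hcx (by linarith), Real.rpow_one]
    rw [e1]
    field_simp
    ring
  have hcont : IntervalIntegrable (fun x => (x - a) * (c - x) ^ (α + 1)) volume a c := by
    apply ContinuousOn.intervalIntegrable
    apply ContinuousOn.mul (by fun_prop)
    exact ContinuousOn.rpow_const (by fun_prop) (fun x _ => Or.inr (by linarith))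
  rw [intervalIntegral.integral_eq_sub_of_hasDerivAt hderiv hcont]
  have e3 : (c - a) ^ (α + 3) = (c - a) * (c - a) ^ (α + 2) := by
    rw [show α + 3 = 1 + (α + 2) by ring, Real.rpow_add' (by linarith) (by linarith),
      Real.rpow_one]
  simp only [hG, sub_self, Real.zero_rpow (by linarith : α + 2 ≠ 0),
    Real.zero_rpow (by linarith : α + 3 ≠ 0)]
  rw [e3]
  field_simp
  ring

lemma holder_step (a c q C : ℝ) (g : ℝ → ℝ) (hac : a < c) (hq : 1 ≤ q)
    (hg : AEStronglyMeasurable g (volume.restrict (Set.Ioc a c)))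
    (hC : ∀ x ∈ Set.Icc a c, |g x| ≤ C) :
    ∫ x in a..c, (x - a) * (c - x) * |g x|
      ≤ ((c - a) ^ 3 / 6) ^ (1 - 1/q) *
        (∫ x in a..c, (x - a) * (c - x) * |g x| ^ q) ^ (1/q) := by
  have hq0 : 0 < q := lt_of_lt_of_le zero_lt_one hq
  rcases eq_or_lt_of_le hq with rfl | hq1
  · simp only [Real.rpow_one, div_one, sub_self, Real.rpow_zero, one_mul, le_refl]
  -- 1 < q
  have hC0 : 0 ≤ C := (abs_nonneg _).trans (hC a ⟨le_refl a, hac.le⟩)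
  set μ := volume.restrict (Set.Ioc a c) with hμ
  haveI : IsFiniteMeasure μ := ⟨by
    rw [hμ, Measure.restrict_apply_univ]; exact measure_Ioc_lt_top⟩
  set p := q.conjExponent with hp
  have hpq : p.HolderConjugate q := (Real.HolderConjugate.conjExponent hq1).symm
  have hp0 : 0 < p := hpq.pos
  have hinv : 1/p = 1 - 1/q := by
    have := hpq.inv_add_inv_eq_one
    rw [one_div, one_div]; linarith
  set W : ℝ → ℝ := fun x => (x - a) * (c - x) with hW
  have hWcont : Continuous W := by fun_prop
  have hW0 : ∀ x ∈ Set.Ioc a c, 0 ≤ W x := fun x hx => by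
    have := hx.1; have := hx.2; simp only [hW]; nlinarith
  have hWle : ∀ x ∈ Set.Ioc a c, W x ≤ (c - a) ^ 2 := fun x hx => by
    have := hx.1; have := hx.2; simp only [hW]; nlinarith
  set F : ℝ → ℝ := fun x => W x ^ (1/p) with hF
  set G : ℝ → ℝ := fun x => W x ^ (1/q) * |g x| with hGdef
  have hFc : Continuous F :=
    hWcont.rpow_const (fun x => Or.inr (by positivity))
  have hgabs : AEStronglyMeasurable (fun x => |g x|) μ := by
    have := hg.norm; simpa only [Real.norm_eq_abs] using this
  have hF0 : 0 ≤ᵐ[μ] F := by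
    rw [hμ]
    refine (ae_restrict_iff' measurableSet_Ioc).2 (Eventually.of_forall fun x hx => ?_)
    exact Real.rpow_nonneg (hW0 x hx) _
  have hG0 : 0 ≤ᵐ[μ] G := by
    rw [hμ]
    refine (ae_restrict_iff' measurableSet_Ioc).2 (Eventually.of_forall fun x hx => ?_)
    exact mul_nonneg (Real.rpow_nonneg (hW0 x hx) _) (abs_nonneg _)
  have hFm : MemLp F (ENNReal.ofReal p) μ := by
    refine MemLp.of_bound hFc.aestronglyMeasurable (((c - a) ^ 2) ^ (1/p)) ?_
    rw [hμ]
    refine (ae_restrict_iff' measurableSet_Ioc).2 (Eventually.of_forall fun x hx => ?_)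
    rw [Real.norm_eq_abs, abs_of_nonneg (Real.rpow_nonneg (hW0 x hx) _)]
    exact Real.rpow_le_rpow (hW0 x hx) (hWle x hx) (by positivity)
  have hGm : MemLp G (ENNReal.ofReal q) μ := by
    refine MemLp.of_bound
      (((hWcont.rpow_const (fun x => Or.inr (by positivity))).aestronglyMeasurable).mul hgabs)
      ((((c - a) ^ 2) ^ (1/q)) * C) ?_
    rw [hμ]
    refine (ae_restrict_iff' measurableSet_Ioc).2 (Eventually.of_forall fun x hx => ?_)
    rw [Real.norm_eq_abs, abs_of_nonneg (mul_nonneg (Real.rpow_nonneg (hW0 x hx) _) (abs_nonneg _))]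
    exact mul_le_mul (Real.rpow_le_rpow (hW0 x hx) (hWle x hx) (by positivity))
      (hC x ⟨hx.1.le, hx.2⟩) (abs_nonneg _) (by positivity)
  have key := MeasureTheory.integral_mul_le_Lp_mul_Lq_of_nonneg hpq hF0 hG0 hFm hGm
  -- rewrite the three integrals
  have e1 : ∫ x, F x * G x ∂μ = ∫ x in a..c, W x * |g x| := by
    rw [intervalIntegral.integral_of_le hac.le, hμ]
    refine (setIntegral_congr_ae measurableSet_Ioc (Eventually.of_forall fun x hx => ?_)).symm
    simp only [hF, hGdef, ← mul_assoc, ← Real.rpow_add' (hW0 x hx) (by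
      rw [hinv]; norm_num : 1/p + 1/q ≠ 0)]
    rw [show (1:ℝ)/p + 1/q = 1 by rw [hinv]; ring, Real.rpow_one]
  have e2 : ∫ x, F x ^ p ∂μ = (c - a) ^ 3 / 6 := by
    rw [hμ, ← intervalIntegral.integral_of_le hac.le (f := fun x => F x ^ p)]
    rw [show ((c-a)^3/6 : ℝ) = ∫ x in a..c, (x - a) * (c - x) from (weight_integral a c).symm]
    refine intervalIntegral.integral_congr fun x hx => ?_
    rw [Set.uIcc_of_le hac.le] at hx
    have hW0x : 0 ≤ W x := by
      have := hx.1; have := hx.2; simp only [hW]; nlinarith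
    simp only [hF]
    rw [← Real.rpow_mul hW0x, one_div_mul_cancel hp0.ne', Real.rpow_one]
  have e3 : ∫ x, G x ^ q ∂μ = ∫ x in a..c, (x - a) * (c - x) * |g x| ^ q := by
    rw [intervalIntegral.integral_of_le hac.le, hμ]
    refine (setIntegral_congr_ae measurableSet_Ioc (Eventually.of_forall fun x hx => ?_)).symm
    simp only [hGdef]
    rw [Real.mul_rpow (Real.rpow_nonneg (hW0 x hx) _) (abs_nonneg _),
      ← Real.rpow_mul (hW0 x hx), one_div_mul_cancel hq0.ne', Real.rpow_one]
  rw [e1, e2, e3, hinv] at key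
  calc ∫ x in a..c, (x - a) * (c - x) * |g x|
      = ∫ x in a..c, W x * |g x| := by
        refine intervalIntegral.integral_congr fun x hx => ?_; simp [hW, mul_assoc]
    _ ≤ _ := key

set_option maxHeartbeats 1000000 in
theorem thm21
    (f f' f'' : ℝ → ℝ) (a b bstar m α q : ℝ)
    (hb : b ≤ bstar) (hbstar : 0 < bstar)
    (ha : 0 ≤ a) (hab : a < b) (hm : m ∈ Set.Ioc (0:ℝ) 1) (hα : α ∈ Set.Icc (0:ℝ) 1)
    (hamb : a < m * b) (hq : 1 ≤ q)
    (hf : ∀ x ∈ Set.Icc a (m * b), HasDerivAt f (f' x) x)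
    (hf' : ∀ x ∈ Set.Icc a (m * b), HasDerivAt f' (f'' x) x)
    (hint : IntervalIntegrable f'' MeasureTheory.volume a (m * b))
    (hconv : ∀ x ∈ Set.Icc a b, ∀ y ∈ Set.Icc a b, ∀ t ∈ Set.Icc (0:ℝ) 1,
      |f'' (t * x + m * (1 - t) * y)| ^ q
        ≤ t ^ α * |f'' x| ^ q + m * (1 - t ^ α) * |f'' y| ^ q) :
    |(f a + f (m * b)) / 2 - (1 / (m * b - a)) * ∫ x in a..(m * b), f x|
      ≤ ((m * b - a) ^ 2 / 2) * (1 / 6 : ℝ) ^ (1 - 1 / q) *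
        (|f'' a| ^ q / ((α + 2) * (α + 3))
          + m * |f'' b| ^ q * (1 / 6 - 1 / ((α + 2) * (α + 3)))) ^ (1 / q) := by
  obtain ⟨hm0, hm1⟩ := hm
  obtain ⟨hα0, hα1⟩ := hα
  have hb0 : 0 < b := lt_of_le_of_lt ha hab
  set c := m * b with hcdef
  have hac : a < c := hamb
  have hcb : c ≤ b := by rw [hcdef]; nlinarith
  have hca : (0:ℝ) < c - a := by linarith
  have hq0 : (0:ℝ) < q := lt_of_lt_of_le zero_lt_one hq
  have hIcc : Set.uIcc a c = Set.Icc a c := Set.uIcc_of_le hac.le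
  have h2 : (0:ℝ) < α + 2 := by linarith
  have h3 : (0:ℝ) < α + 3 := by linarith
  set A := |f'' a| ^ q with hA
  set B := |f'' b| ^ q with hB
  have hA0 : 0 ≤ A := Real.rpow_nonneg (abs_nonneg _) _
  have hB0 : 0 ≤ B := Real.rpow_nonneg (abs_nonneg _) _
  set K := A / ((α + 2) * (α + 3)) + m * B * (1/6 - 1 / ((α + 2) * (α + 3))) with hK
  -- continuity of f, f'
  have hfc : ContinuousOn f (Set.Icc a c) := fun x hx =>
    (hf x hx).continuousAt.continuousWithinAt
  have hf'c : ContinuousOn f' (Set.Icc a c) := fun x hx =>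
    (hf' x hx).continuousAt.continuousWithinAt
  -- Step 1: integration by parts identity
  have ibp1 : ∫ x in a..c, (x - a) * (c - x) * f'' x
      = (c - a) * (c - c) * f' c - (a - a) * (c - a) * f' a
        - ∫ x in a..c, (a + c - 2 * x) * f' x := by
    refine intervalIntegral.integral_mul_deriv_eq_deriv_mul_of_hasDerivAt
      (u := fun x => (x - a) * (c - x)) (v := f') (u' := fun x => a + c - 2 * x) (v' := f'')
      (by fun_prop) (by rw [hIcc]; exact hf'c) (fun x hx => ?_) (fun x hx => ?_)
      (Continuous.intervalIntegrable (by fun_prop) a c) hint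
    · have h1 : HasDerivAt (fun y : ℝ => y - a) 1 x := by
        simpa using (hasDerivAt_id x).sub_const a
      have h2 : HasDerivAt (fun y : ℝ => c - y) (-1) x := by
        simpa using (hasDerivAt_id x).const_sub c
      have h := h1.mul h2
      refine h.congr_deriv ?_
      ring
    · rw [min_eq_left hac.le, max_eq_right hac.le] at hx
      exact hf' x ⟨hx.1.le, hx.2.le⟩
  have ibp2 : ∫ x in a..c, (a + c - 2 * x) * f' x
      = (a + c - 2 * c) * f c - (a + c - 2 * a) * f a
        - ∫ x in a..c, (-2) * f x := by
    refine intervalIntegral.integral_mul_deriv_eq_deriv_mul_of_hasDerivAt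
      (u := fun x => a + c - 2 * x) (v := f) (u' := fun x => (-2:ℝ)) (v' := f')
      (by fun_prop) (by rw [hIcc]; exact hfc) (fun x hx => ?_) (fun x hx => ?_)
      (Continuous.intervalIntegrable (by fun_prop) a c)
      (by rw [← hIcc] at hf'c; exact hf'c.intervalIntegrable)
    · have h : HasDerivAt (fun y : ℝ => a + c - 2 * y) (-(2 * 1)) x := by
        exact ((hasDerivAt_id x).const_mul (2:ℝ)).const_sub (a + c)
      refine h.congr_deriv ?_
      ring
    · rw [min_eq_left hac.le, max_eq_right hac.le] at hx
      exact hf x ⟨hx.1.le, hx.2.le⟩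
  have key : ∫ x in a..c, (x - a) * (c - x) * f'' x
      = (c - a) * (f a + f c) - 2 * ∫ x in a..c, f x := by
    rw [ibp1, ibp2, intervalIntegral.integral_const_mul]
    ring
  have hE : (f a + f c) / 2 - (1 / (c - a)) * ∫ x in a..c, f x
      = (∫ x in a..c, (x - a) * (c - x) * f'' x) / (2 * (c - a)) := by
    rw [key]; field_simp
  -- Step 2: convexity pointwise bounds
  have hconv' : ∀ x ∈ Set.Icc a c, |f'' x| ^ q
      ≤ ((c - x)/(c - a)) ^ α * A + m * (1 - ((c - x)/(c - a)) ^ α) * B := by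
    intro x hx
    set t := (c - x)/(c - a) with ht
    have ht0 : 0 ≤ t := div_nonneg (by linarith [hx.2]) hca.le
    have ht1 : t ≤ 1 := (div_le_one hca).2 (by linarith [hx.1])
    have hxs : t * a + m * (1 - t) * b = x := by
      have hmb : m * (1 - t) * b = (1 - t) * c := by rw [hcdef]; ring
      rw [hmb, ht]
      field_simp
      ring
    have h := hconv a ⟨le_refl a, hab.le⟩ b ⟨hab.le, le_refl b⟩ t ⟨ht0, ht1⟩
    rw [hxs] at h
    exact h
  have htα : ∀ x ∈ Set.Icc a c, 0 ≤ ((c - x)/(c - a)) ^ α ∧ ((c - x)/(c - a)) ^ α ≤ 1 := by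
    intro x hx
    have ht0 : 0 ≤ (c - x)/(c - a) := div_nonneg (by linarith [hx.2]) hca.le
    have ht1 : (c - x)/(c - a) ≤ 1 := (div_le_one hca).2 (by linarith [hx.1])
    exact ⟨Real.rpow_nonneg ht0 _, Real.rpow_le_one ht0 ht1 hα0⟩
  have hbdq : ∀ x ∈ Set.Icc a c, |f'' x| ^ q ≤ A + m * B := by
    intro x hx
    have h := hconv' x hx
    obtain ⟨h0, h1⟩ := htα x hx
    nlinarith [mul_nonneg (sub_nonneg.2 h1) hA0, mul_nonneg (mul_nonneg hm0.le hB0) h0]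
  have hbd : ∀ x ∈ Set.Icc a c, |f'' x| ≤ (A + m * B) ^ (1/q) := by
    intro x hx
    have h := Real.rpow_le_rpow (Real.rpow_nonneg (abs_nonneg _) _) (hbdq x hx)
      (by positivity : (0:ℝ) ≤ 1/q)
    rwa [← Real.rpow_mul (abs_nonneg _), mul_one_div_cancel hq0.ne', Real.rpow_one] at h
  -- Step 3: integrability
  have hWcont : Continuous fun x : ℝ => (x - a) * (c - x) := by fun_prop
  have hmeas : AEStronglyMeasurable f'' (volume.restrict (Set.Ioc a c)) :=
    hint.1.aestronglyMeasurable
  have habsq_meas : AEStronglyMeasurable (fun x => |f'' x| ^ q)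
      (volume.restrict (Set.Ioc a c)) :=
    (Continuous.comp_aestronglyMeasurable
      (continuous_abs.rpow_const (fun y => Or.inr hq0.le)) hmeas)
  have habsq_int : IntervalIntegrable (fun x => |f'' x| ^ q) volume a c := by
    rw [intervalIntegrable_iff_integrableOn_Ioc_of_le hac.le]
    refine Integrable.mono' (integrable_const (A + m * B)) habsq_meas ?_
    refine (ae_restrict_iff' measurableSet_Ioc).2 (Eventually.of_forall fun x hx => ?_)
    rw [Real.norm_eq_abs, abs_of_nonneg (Real.rpow_nonneg (abs_nonneg _) _)]
    exact hbdq x ⟨hx.1.le, hx.2⟩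
  have hI2int : IntervalIntegrable (fun x => (x - a) * (c - x) * |f'' x| ^ q) volume a c :=
    habsq_int.continuousOn_mul hWcont.continuousOn
  -- Step 4: compute the weighted rpow integral
  have hS : ∫ x in a..c, (x - a) * (c - x) * ((c - x)/(c - a)) ^ α
      = (c - a) ^ 3 / ((α + 2) * (α + 3)) := by
    have hcongr : ∀ x ∈ Set.uIcc a c, (x - a) * (c - x) * ((c - x)/(c - a)) ^ α
        = ((c - a) ^ α)⁻¹ * ((x - a) * (c - x) ^ (α + 1)) := by
      intro x hx
      rw [hIcc] at hx
      have hcx : 0 ≤ c - x := by linarith [hx.2]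
      rw [Real.div_rpow hcx hca.le,
        show α + 1 = α + 1 by rfl,
        Real.rpow_add' hcx (by linarith : α + 1 ≠ 0), Real.rpow_one]
      have hne : (c - a) ^ α ≠ 0 := (Real.rpow_pos_of_pos hca α).ne'
      field_simp [hne]
    rw [intervalIntegral.integral_congr hcongr, intervalIntegral.integral_const_mul,
      rpow_weight_integral a c α hac hα0]
    have he : (c - a) ^ (α + 3) = (c - a) ^ α * (c - a) ^ 3 := by
      rw [Real.rpow_add hca α 3, show (3:ℝ) = ((3:ℕ):ℝ) by norm_num, Real.rpow_natCast]
    have hpos : (0:ℝ) < (c - a) ^ α := Real.rpow_pos_of_pos hca α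
    rw [he, mul_div_assoc, ← mul_assoc, inv_mul_cancel₀ hpos.ne', one_mul]
  have hscont : ContinuousOn (fun x : ℝ => ((c - x)/(c - a)) ^ α) (Set.uIcc a c) :=
    ContinuousOn.rpow_const (by fun_prop) (fun x _ => Or.inr hα0)
  have hScont : ContinuousOn (fun x => (x - a) * (c - x) * ((c - x)/(c - a)) ^ α)
      (Set.uIcc a c) := (hWcont.continuousOn).mul hscont
  have hRint : IntervalIntegrable
      (fun x => (x - a) * (c - x) * (((c - x)/(c - a)) ^ α * A
        + m * (1 - ((c - x)/(c - a)) ^ α) * B)) volume a c := by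
    apply ContinuousOn.intervalIntegrable
    exact (hWcont.continuousOn).mul ((hscont.mul continuousOn_const).add
      ((continuousOn_const.mul (continuousOn_const.sub hscont)).mul continuousOn_const))
  have hR : ∫ x in a..c, (x - a) * (c - x) * (((c - x)/(c - a)) ^ α * A
        + m * (1 - ((c - x)/(c - a)) ^ α) * B)
      = (c - a) ^ 3 * K := by
    have hcongr : ∀ x ∈ Set.uIcc a c,
        (x - a) * (c - x) * (((c - x)/(c - a)) ^ α * A
          + m * (1 - ((c - x)/(c - a)) ^ α) * B)
        = (A - m * B) * ((x - a) * (c - x) * ((c - x)/(c - a)) ^ α)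
          + (m * B) * ((x - a) * (c - x)) := fun x _ => by ring
    rw [intervalIntegral.integral_congr hcongr,
      intervalIntegral.integral_add
        ((hScont.intervalIntegrable).const_mul _)
        ((Continuous.intervalIntegrable hWcont a c).const_mul _),
      intervalIntegral.integral_const_mul, intervalIntegral.integral_const_mul,
      hS, weight_integral a c, hK]
    field_simp
    ring
  -- Step 5: I2 bound
  have hI2bd : ∫ x in a..c, (x - a) * (c - x) * |f'' x| ^ q ≤ (c - a) ^ 3 * K := by
    rw [← hR]
    refine intervalIntegral.integral_mono_on hac.le hI2int hRint fun x hx => ?_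
    have hW0 : 0 ≤ (x - a) * (c - x) :=
      mul_nonneg (by linarith [hx.1]) (by linarith [hx.2])
    exact mul_le_mul_of_nonneg_left (hconv' x hx) hW0
  have hI2nonneg : 0 ≤ ∫ x in a..c, (x - a) * (c - x) * |f'' x| ^ q :=
    intervalIntegral.integral_nonneg hac.le fun x hx =>
      mul_nonneg (mul_nonneg (by linarith [hx.1]) (by linarith [hx.2]))
        (Real.rpow_nonneg (abs_nonneg _) _)
  have hK0 : 0 ≤ K := by
    have h6 : (6:ℝ) ≤ (α + 2) * (α + 3) := by nlinarith
    have hP : (0:ℝ) < (α + 2) * (α + 3) := by positivity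
    have hinv6 : 1 / ((α + 2) * (α + 3)) ≤ 1/6 :=
      one_div_le_one_div_of_le (by norm_num) h6
    exact add_nonneg (div_nonneg hA0 hP.le)
      (mul_nonneg (mul_nonneg hm0.le hB0) (by linarith))
  -- Step 6: |integral| bound
  have habs1 : |∫ x in a..c, (x - a) * (c - x) * f'' x|
      ≤ ∫ x in a..c, (x - a) * (c - x) * |f'' x| := by
    calc |∫ x in a..c, (x - a) * (c - x) * f'' x|
        ≤ ∫ x in a..c, |(x - a) * (c - x) * f'' x| :=
          intervalIntegral.abs_integral_le_integral_abs hac.le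
      _ = ∫ x in a..c, (x - a) * (c - x) * |f'' x| := by
          refine intervalIntegral.integral_congr fun x hx => ?_
          rw [hIcc] at hx
          rw [abs_mul, abs_of_nonneg (mul_nonneg (by linarith [hx.1]) (by linarith [hx.2]))]
  have hholder := holder_step a c q ((A + m * B) ^ (1/q)) f'' hac hq hmeas hbd
  -- Step 7: assemble
  have hchain : |∫ x in a..c, (x - a) * (c - x) * f'' x|
      ≤ ((c - a) ^ 3 / 6) ^ (1 - 1/q) * ((c - a) ^ 3 * K) ^ (1/q) := by
    refine habs1.trans (hholder.trans ?_)
    refine mul_le_mul_of_nonneg_left ?_ (Real.rpow_nonneg (by positivity) _)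
    exact Real.rpow_le_rpow hI2nonneg hI2bd (by positivity)
  rw [hE, abs_div, abs_of_pos (by linarith : (0:ℝ) < 2 * (c - a))]
  calc |∫ x in a..c, (x - a) * (c - x) * f'' x| / (2 * (c - a))
      ≤ (((c - a) ^ 3 / 6) ^ (1 - 1/q) * ((c - a) ^ 3 * K) ^ (1/q)) / (2 * (c - a)) := by
        apply div_le_div_of_nonneg_right hchain (by linarith)
    _ = ((c - a) ^ 2 / 2) * (1/6 : ℝ) ^ (1 - 1/q) * K ^ (1/q) := by
        have hsplit : ((c - a) ^ 3 / 6 : ℝ) ^ (1 - 1/q)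
            = ((c - a) ^ 3) ^ (1 - 1/q) * (1/6 : ℝ) ^ (1 - 1/q) := by
          rw [show ((c - a) ^ 3 / 6 : ℝ) = (c - a) ^ 3 * (1/6) by ring,
            Real.mul_rpow (by positivity) (by norm_num)]
        have hsplit2 : ((c - a) ^ 3 * K) ^ (1/q) = ((c - a) ^ 3) ^ (1/q) * K ^ (1/q) :=
          Real.mul_rpow (by positivity) hK0
        have hjoin : ((c - a) ^ 3) ^ (1 - 1/q) * ((c - a) ^ 3) ^ (1/q) = (c - a) ^ 3 := by
          rw [← Real.rpow_add (by positivity), sub_add_cancel, Real.rpow_one]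
        rw [hsplit, hsplit2]
        calc ((c - a) ^ 3) ^ (1 - 1/q) * (1/6 : ℝ) ^ (1 - 1/q)
              * (((c - a) ^ 3) ^ (1/q) * K ^ (1/q)) / (2 * (c - a))
            = ((c - a) ^ 3) ^ (1 - 1/q) * ((c - a) ^ 3) ^ (1/q)
              * ((1/6 : ℝ) ^ (1 - 1/q) * K ^ (1/q)) / (2 * (c - a)) := by ring
          _ = (c - a) ^ 3 * ((1/6 : ℝ) ^ (1 - 1/q) * K ^ (1/q)) / (2 * (c - a)) := by
              rw [hjoin]
          _ = ((c - a) ^ 2 / 2) * (1/6 : ℝ) ^ (1 - 1/q) * K ^ (1/q) := by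
              field_simp
end

section
/- Let f : [a,b] → ℝ be twice differentiable with f'' integrable, a < b. If |f''| is convex on [a,b], then |(f(a)+f(b))/2 − (1/(b−a))∫_a^b f(x)dx| ≤ ((b−a)²/24)·(|f''(a)| + |f''(b)|). -/
open MeasureTheory intervalIntegral Set

theorem hh_second_deriv_convex
    (f f' f'' : ℝ → ℝ) (a b : ℝ) (hab : a < b)
    (hf : ∀ x ∈ Set.Icc a b, HasDerivAt f (f' x) x)
    (hf' : ∀ x ∈ Set.Icc a b, HasDerivAt f' (f'' x) x)
    (hint : IntervalIntegrable f'' MeasureTheory.volume a b)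
    (hconv : ∀ x ∈ Set.Icc a b, ∀ y ∈ Set.Icc a b, ∀ t ∈ Set.Icc (0:ℝ) 1,
      |f'' (t * x + (1 - t) * y)| ≤ t * |f'' x| + (1 - t) * |f'' y|) :
    |(f a + f b) / 2 - (1 / (b - a)) * ∫ x in a..b, f x|
      ≤ ((b - a) ^ 2 / 24) * (|f'' a| + |f'' b|) := by
  have hba : (0:ℝ) < b - a := by linarith
  set A := |f'' a| with hA
  set B := |f'' b| with hB
  have hIcc : Set.uIcc a b = Set.Icc a b := Set.uIcc_of_le hab.le
  have hcf' : ContinuousOn f' (Set.uIcc a b) := by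
    rw [hIcc]; exact fun x hx => ((hf' x hx).continuousAt).continuousWithinAt
  have hintf' : IntervalIntegrable f' volume a b := hcf'.intervalIntegrable
  -- first integration by parts : ∫ (x-a)(b-x) f'' = - ∫ (a+b-2x) f'
  have ibp1 : ∫ x in a..b, ((x-a)*(b-x)) * f'' x
      = ((b-a)*(b-b)) * f' b - ((a-a)*(b-a)) * f' a - ∫ x in a..b, (a + b - 2*x) * f' x := by
    apply intervalIntegral.integral_mul_deriv_eq_deriv_mul
    · intro x hx
      have h := (((hasDerivAt_id x).sub_const a).mul
        ((hasDerivAt_const x b).sub (hasDerivAt_id x)))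
      simp only [id_eq, Pi.mul_def, Pi.sub_def] at h
      convert h using 1; ring
    · intro x hx; exact hf' x (hIcc ▸ hx)
    · exact Continuous.intervalIntegrable (μ := MeasureTheory.volume) (by fun_prop) a b
    · exact hint
  -- second integration by parts
  have ibp2 : ∫ x in a..b, (a + b - 2*x) * f' x
      = (a + b - 2*b) * f b - (a + b - 2*a) * f a - ∫ x in a..b, (-2) * f x := by
    apply intervalIntegral.integral_mul_deriv_eq_deriv_mul
    · intro x hx
      have h := ((hasDerivAt_const x (a+b)).sub ((hasDerivAt_id x).const_mul 2))
      simp only [id_eq, Pi.sub_def] at h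
      exact h.congr_deriv (by ring)
    · intro x hx; exact hf x (hIcc ▸ hx)
    · exact Continuous.intervalIntegrable (μ := MeasureTheory.volume) (by fun_prop) a b
    · exact hintf'
  have key : ∫ x in a..b, ((x-a)*(b-x)) * f'' x
      = (b-a)*(f a + f b) - 2 * ∫ x in a..b, f x := by
    rw [ibp1, ibp2, intervalIntegral.integral_const_mul]
    ring
  have heq : (f a + f b) / 2 - (1 / (b - a)) * ∫ x in a..b, f x
      = (∫ x in a..b, ((x-a)*(b-x)) * f'' x) / (2*(b-a)) := by
    rw [key]; field_simp
  -- integrability facts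
  have hgint : IntervalIntegrable (fun x => ((x-a)*(b-x)) * f'' x) volume a b := by
    exact hint.continuousOn_mul (by fun_prop)
  have hbound_cont : IntervalIntegrable
      (fun x => (x-a)*(b-x)*((b-x)*A + (x-a)*B)/(b-a)) volume a b :=
    (((by fun_prop : Continuous fun x : ℝ => (x-a)*(b-x)*((b-x)*A + (x-a)*B))).div_const
      (b-a)).intervalIntegrable a b
  -- pointwise bound on [a,b]
  have hpt : ∀ x ∈ Set.Icc a b,
      |((x-a)*(b-x)) * f'' x| ≤ (x-a)*(b-x)*((b-x)*A + (x-a)*B)/(b-a) := by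
    intro x hx
    obtain ⟨hxa, hxb⟩ := hx
    set t := (b - x)/(b - a) with ht
    have ht0 : 0 ≤ t := div_nonneg (by linarith) hba.le
    have ht1 : t ≤ 1 := by rw [ht, div_le_one hba]; linarith
    have hxt : t * a + (1 - t) * b = x := by
      rw [ht]; field_simp; ring
    have h1t : 1 - t = (x - a)/(b - a) := by
      rw [ht]; field_simp; ring
    have hc := hconv a ⟨le_refl a, hab.le⟩ b ⟨hab.le, le_refl b⟩ t ⟨ht0, ht1⟩
    rw [hxt] at hc
    have hg0 : 0 ≤ (x-a)*(b-x) := mul_nonneg (by linarith) (by linarith)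
    calc |((x-a)*(b-x)) * f'' x| = (x-a)*(b-x) * |f'' x| := by
          rw [abs_mul, abs_of_nonneg hg0]
      _ ≤ (x-a)*(b-x) * (t * A + (1 - t) * B) := by
          exact mul_le_mul_of_nonneg_left hc hg0
      _ = (x-a)*(b-x)*((b-x)*A + (x-a)*B)/(b-a) := by
          rw [ht, h1t]; field_simp; try ring
  -- compute the integral of the bound
  have hval : ∫ x in a..b, (x-a)*(b-x)*((b-x)*A + (x-a)*B)/(b-a)
      = (b-a)^3 * (A + B) / 12 := by
    have hF : ∀ x ∈ Set.uIcc a b, HasDerivAt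
        (fun x => (A * ((b-a)^2*(x-a)^2/2 - 2*(b-a)*(x-a)^3/3 + (x-a)^4/4)
          + B * ((b-a)*(x-a)^3/3 - (x-a)^4/4)) / (b-a))
        ((x-a)*(b-x)*((b-x)*A + (x-a)*B)/(b-a)) x := by
      intro x hx
      have hu : HasDerivAt (fun x : ℝ => x - a) 1 x := (hasDerivAt_id x).sub_const a
      have h2 := (hu.pow 2)
      have h3 := (hu.pow 3)
      have h4 := (hu.pow 4)
      have := ((((h2.const_mul ((b-a)^2)).div_const 2).sub
            (((h3.const_mul (2*(b-a))).div_const 3))).add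
            ((h4.div_const 4))).const_mul A
      have h2' := (((h3.const_mul (b-a)).div_const 3).sub (h4.div_const 4)).const_mul B
      have hsum := (this.add h2').div_const (b-a)
      refine hsum.congr_deriv ?_
      rw [div_eq_div_iff hba.ne' hba.ne']
      ring
    rw [intervalIntegral.integral_eq_sub_of_hasDerivAt hF hbound_cont,
      div_sub_div_same, div_eq_iff hba.ne']
    ring
  rw [heq, abs_div, abs_of_pos (by linarith : (0:ℝ) < 2*(b-a))]
  have habs : |∫ x in a..b, ((x-a)*(b-x)) * f'' x|
      ≤ (b-a)^3 * (A + B) / 12 := by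
    calc |∫ x in a..b, ((x-a)*(b-x)) * f'' x|
        ≤ ∫ x in a..b, |((x-a)*(b-x)) * f'' x| :=
          intervalIntegral.abs_integral_le_integral_abs hab.le
      _ ≤ ∫ x in a..b, (x-a)*(b-x)*((b-x)*A + (x-a)*B)/(b-a) := by
          apply intervalIntegral.integral_mono_on hab.le hgint.abs hbound_cont hpt
      _ = (b-a)^3 * (A + B) / 12 := hval
  rw [div_le_iff₀ (by linarith : (0:ℝ) < 2*(b-a))]
  calc |∫ x in a..b, ((x-a)*(b-x)) * f'' x| ≤ (b-a)^3 * (A + B) / 12 := habs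
    _ = ((b - a) ^ 2 / 24) * (A + B) * (2*(b-a)) := by ring
end

section
/- Let f : [0, b*] → ℝ be twice differentiable on an open interval containing [a, mb], 0 ≤ a < b ≤ b*, m ∈ (0,1], a < mb, f'' integrable on [a, mb]. If |f''|^q is (α,m)-convex on [a,b] for (α,m) ∈ [0,1]×(0,1], q > 1, and 1/p + 1/q = 1, then |(f(a)+f(mb))/2 − (1/(mb−a))∫_a^{mb} f(x)dx| ≤ ((mb−a)²/8)·(Γ(1+p)/Γ(3/2+p))^{1/p}·( |f''(a)|^q/(α+1) + m|f''(b)|^q·α/(α+1) )^{1/q}. -/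
open MeasureTheory intervalIntegral

lemma beta_real {p : ℝ} (hp : 0 < p) :
    ∫ t in (0:ℝ)..1, t ^ p * (1 - t) ^ p
      = Real.Gamma (1 + p) * Real.Gamma (1 + p) / Real.Gamma (2 + 2 * p) := by
  have h1 : (0:ℝ) < 1 + p := by linarith
  have h2 : (0:ℝ) < 2 + 2 * p := by linarith
  have key := Complex.Gamma_mul_Gamma_eq_betaIntegral
    (s := (1 + p : ℂ)) (t := (1 + p : ℂ)) (by simpa using h1) (by simpa using h1)
  have hbeta : Complex.betaIntegral (1 + p) (1 + p)
      = ((∫ t in (0:ℝ)..1, t ^ p * (1 - t) ^ p : ℝ) : ℂ) := by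
    rw [Complex.betaIntegral, ← intervalIntegral.integral_ofReal]
    apply intervalIntegral.integral_congr
    intro x hx
    rw [Set.uIcc_of_le (by norm_num : (0:ℝ) ≤ 1)] at hx
    have hx0 : 0 ≤ x := hx.1
    have hx1 : 0 ≤ 1 - x := by linarith [hx.2]
    show (x:ℂ) ^ ((1:ℂ) + (p:ℂ) - 1) * ((1:ℂ) - (x:ℂ)) ^ ((1:ℂ) + (p:ℂ) - 1)
        = ((x ^ p * (1 - x) ^ p : ℝ) : ℂ)
    rw [show (1:ℂ) + (p:ℂ) - 1 = (p:ℂ) by ring, ← Complex.ofReal_cpow hx0,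
      show (1 : ℂ) - (x:ℂ) = ((1 - x : ℝ) : ℂ) by push_cast; ring,
      ← Complex.ofReal_cpow hx1]
    push_cast
    ring
  rw [hbeta, show ((1:ℂ) + (p:ℂ)) + ((1:ℂ) + (p:ℂ)) = ((2 + 2 * p : ℝ) : ℂ) by push_cast; ring,
    show (1 + (p:ℂ)) = ((1 + p : ℝ) : ℂ) by push_cast; ring,
    Complex.Gamma_ofReal, Complex.Gamma_ofReal] at key
  have key' : Real.Gamma (1 + p) * Real.Gamma (1 + p)
      = Real.Gamma (2 + 2 * p) * ∫ t in (0:ℝ)..1, t ^ p * (1 - t) ^ p := by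
    exact_mod_cast key
  have hG : Real.Gamma (2 + 2 * p) ≠ 0 := (Real.Gamma_pos_of_pos h2).ne'
  rw [eq_div_iff hG, key']
  ring

lemma ibp_id (f f' f'' : ℝ → ℝ) (a B : ℝ) (hab : a ≤ B)
    (hf : ∀ x ∈ Set.Icc a B, HasDerivAt f (f' x) x)
    (hf' : ∀ x ∈ Set.Icc a B, HasDerivAt f' (f'' x) x)
    (hint : IntervalIntegrable f'' MeasureTheory.volume a B) :
    ∫ x in a..B, (x - a) * (B - x) * f'' x
      = (B - a) * (f a + f B) - 2 * ∫ x in a..B, f x := by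
  have huIcc : Set.uIcc a B = Set.Icc a B := Set.uIcc_of_le hab
  have hu : ∀ x ∈ Set.uIcc a B, HasDerivAt (fun x => (x - a) * (B - x)) (a + B - 2 * x) x := by
    intro x _
    have h := (((hasDerivAt_id x).sub_const a).mul ((hasDerivAt_const x B).sub (hasDerivAt_id x)))
    exact h.congr_deriv (by simp only [Pi.sub_apply, id_eq]; ring)
  have hu' : ∀ x ∈ Set.uIcc a B, HasDerivAt (fun x => a + B - 2 * x) (-2 : ℝ) x := by
    intro x _
    have h := ((hasDerivAt_id' x).const_mul 2).const_sub (a + B)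
    exact h.congr_deriv (by norm_num)
  have hcf' : IntervalIntegrable f' MeasureTheory.volume a B := by
    apply ContinuousOn.intervalIntegrable
    rw [huIcc]
    exact fun x hx => ((hf' x hx).continuousAt).continuousWithinAt
  have h1 := intervalIntegral.integral_mul_deriv_eq_deriv_mul hu
    (fun x hx => hf' x (huIcc ▸ hx)) (Continuous.intervalIntegrable (by continuity) _ _) hint
  have h2 := intervalIntegral.integral_mul_deriv_eq_deriv_mul hu'
    (fun x hx => hf x (huIcc ▸ hx)) (Continuous.intervalIntegrable (by continuity) _ _) hcf'
  have h3 : ∫ x in a..B, (-2 : ℝ) * f x = -2 * ∫ x in a..B, f x :=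
    intervalIntegral.integral_const_mul _ _
  simp only [h3] at h2
  rw [h1, h2]
  ring

lemma rpow_aux {a B αe : ℝ} (hab : a < B) (hα : 0 ≤ αe) :
    ∫ x in a..B, ((B - x) / (B - a)) ^ αe = (B - a) / (αe + 1) := by
  have hL : 0 < B - a := by linarith
  have h1 := intervalIntegral.integral_comp_sub_left (a := a) (b := B)
    (fun y => (y / (B - a)) ^ αe) B
  rw [show ∫ x in a..B, ((B - x) / (B - a)) ^ αe = ∫ x in (B-B)..(B-a), (x / (B - a)) ^ αe
    from h1, sub_self]
  rw [intervalIntegral.integral_comp_div (fun u => u ^ αe) hL.ne']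
  rw [zero_div, div_self hL.ne']
  rw [integral_rpow (Or.inl (by linarith : (-1:ℝ) < αe))]
  rw [Real.one_rpow, Real.zero_rpow (by linarith : αe + 1 ≠ 0)]
  simp [smul_eq_mul]
  ring

lemma weight_int {a B p : ℝ} (hab : a < B) (hp : 0 < p) :
    ∫ x in a..B, ((x - a) * (B - x)) ^ p
      = (B - a) ^ (2 * p + 1) * ∫ t in (0:ℝ)..1, t ^ p * (1 - t) ^ p := by
  have hL : 0 < B - a := by linarith
  have h := intervalIntegral.integral_comp_mul_add (a := 0) (b := 1)
      (f := fun x => ((x - a) * (B - x)) ^ p) hL.ne' a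
  rw [show (B - a) * 0 + a = a by ring, show (B - a) * 1 + a = B by ring] at h
  have h2 : ∫ t in (0:ℝ)..1, (((B - a) * t + a - a) * (B - ((B - a) * t + a))) ^ p
      = (B - a) ^ (2 * p) * ∫ t in (0:ℝ)..1, t ^ p * (1 - t) ^ p := by
    rw [← intervalIntegral.integral_const_mul]
    apply intervalIntegral.integral_congr
    intro t ht
    rw [Set.uIcc_of_le (by norm_num : (0:ℝ) ≤ 1)] at ht
    dsimp only
    rw [show ((B - a) * t + a - a) * (B - ((B - a) * t + a)) = ((B - a) * (B - a)) * (t * (1 - t))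
        by ring,
      Real.mul_rpow (by positivity) (mul_nonneg ht.1 (by linarith [ht.2])),
      Real.mul_rpow ht.1 (by linarith [ht.2])]
    congr 1
    rw [show (B - a) * (B - a) = (B - a) ^ (2:ℕ) by ring, ← Real.rpow_natCast (B - a) 2,
      ← Real.rpow_mul hL.le]
    norm_num
  rw [h2] at h
  have : (B - a) ^ (2 * p + 1) = (B - a) * (B - a) ^ (2 * p) := by
    rw [Real.rpow_add hL, Real.rpow_one]; ring
  rw [this]
  rw [smul_eq_mul] at h
  field_simp at h
  linarith [h]

set_option maxHeartbeats 1600000 in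
theorem thm22
    (f f' f'' : ℝ → ℝ) (a b bstar m α p q : ℝ)
    (hb : b ≤ bstar) (hbstar : 0 < bstar)
    (ha : 0 ≤ a) (hab : a < b) (hm : m ∈ Set.Ioc (0:ℝ) 1) (hα : α ∈ Set.Icc (0:ℝ) 1)
    (hamb : a < m * b) (hq : 1 < q) (hpq : 1 / p + 1 / q = 1)
    (hf : ∀ x ∈ Set.Icc a (m * b), HasDerivAt f (f' x) x)
    (hf' : ∀ x ∈ Set.Icc a (m * b), HasDerivAt f' (f'' x) x)
    (hint : IntervalIntegrable f'' MeasureTheory.volume a (m * b))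
    (hconv : ∀ x ∈ Set.Icc a b, ∀ y ∈ Set.Icc a b, ∀ t ∈ Set.Icc (0:ℝ) 1,
      |f'' (t * x + m * (1 - t) * y)| ^ q
        ≤ t ^ α * |f'' x| ^ q + m * (1 - t ^ α) * |f'' y| ^ q) :
    |(f a + f (m * b)) / 2 - (1 / (m * b - a)) * ∫ x in a..(m * b), f x|
      ≤ ((m * b - a) ^ 2 / 8) * (Real.Gamma (1 + p) / Real.Gamma (3 / 2 + p)) ^ (1 / p) *
        (|f'' a| ^ q / (α + 1) + m * |f'' b| ^ q * (α / (α + 1))) ^ (1 / q) := by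
  obtain ⟨hm0, hm1⟩ := hm
  obtain ⟨hα0, hα1⟩ := hα
  have hL : 0 < m * b - a := by linarith
  have hq0 : 0 < q := lt_trans one_pos hq
  have hiq : 0 < 1 / q := by positivity
  have hiq1 : 1 / q < 1 := by rw [div_lt_one hq0]; exact hq
  have hip : 0 < 1 / p := by linarith
  have hp0 : 0 < p := one_div_pos.mp hip
  have hp1 : 1 < p := (div_lt_one hp0).mp (by linarith)
  have hcon : Real.HolderConjugate p q := Real.holderConjugate_iff.mpr ⟨hp1, by rw [← one_div, ← one_div]; exact hpq⟩
  have hc1 : (0:ℝ) ≤ |f'' a| ^ q := Real.rpow_nonneg (abs_nonneg _) _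
  have hc2 : (0:ℝ) ≤ |f'' b| ^ q := Real.rpow_nonneg (abs_nonneg _) _
  have hα1' : (0:ℝ) < α + 1 := by linarith
  -- pointwise convexity bound
  have hbound : ∀ x ∈ Set.Icc a (m * b), |f'' x| ^ q
      ≤ ((m * b - x) / (m * b - a)) ^ α * |f'' a| ^ q
        + m * (1 - ((m * b - x) / (m * b - a)) ^ α) * |f'' b| ^ q := by
    intro x hx
    set t := (m * b - x) / (m * b - a) with htdef
    have ht0 : 0 ≤ t := div_nonneg (by linarith [hx.2]) hL.le
    have ht1 : t ≤ 1 := by rw [htdef, div_le_one hL]; linarith [hx.1]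
    have hx' : t * a + m * (1 - t) * b = x := by
      rw [htdef]; field_simp; ring
    calc |f'' x| ^ q = |f'' (t * a + m * (1 - t) * b)| ^ q := by rw [hx']
    _ ≤ _ := hconv a ⟨le_refl a, hab.le⟩ b ⟨hab.le, le_refl b⟩ t ⟨ht0, ht1⟩
  -- crude bound
  have hCb : ∀ x ∈ Set.Icc a (m * b), |f'' x| ^ q ≤ |f'' a| ^ q + m * |f'' b| ^ q := by
    intro x hx
    have h := hbound x hx
    have ht0 : 0 ≤ (m * b - x) / (m * b - a) := div_nonneg (by linarith [hx.2]) hL.le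
    have ht1 : (m * b - x) / (m * b - a) ≤ 1 := by rw [div_le_one hL]; linarith [hx.1]
    have h1 : ((m * b - x) / (m * b - a)) ^ α ≤ 1 := Real.rpow_le_one ht0 ht1 hα0
    have h2 : 0 ≤ ((m * b - x) / (m * b - a)) ^ α := Real.rpow_nonneg ht0 _
    nlinarith [mul_nonneg (sub_nonneg.mpr h1) hc1, mul_nonneg (mul_nonneg hm0.le h2) hc2]
  haveI : IsFiniteMeasure (MeasureTheory.volume.restrict (Set.Ioc a (m * b))) :=
    ⟨by rw [Measure.restrict_apply_univ]; exact measure_Ioc_lt_top⟩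
  have hmeasf : AEStronglyMeasurable f'' (MeasureTheory.volume.restrict (Set.Ioc a (m * b))) :=
    hint.1.aestronglyMeasurable
  have habs : AEStronglyMeasurable (fun x => |f'' x|)
      (MeasureTheory.volume.restrict (Set.Ioc a (m * b))) := by
    simpa only [Real.norm_eq_abs] using hmeasf.norm
  have hMemG : MemLp (fun x => |f'' x|) (ENNReal.ofReal q)
      (MeasureTheory.volume.restrict (Set.Ioc a (m * b))) := by
    apply MemLp.of_bound habs ((|f'' a| ^ q + m * |f'' b| ^ q) ^ (1 / q))
    rw [ae_restrict_iff' measurableSet_Ioc]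
    filter_upwards with x hx
    have h := hCb x (Set.Ioc_subset_Icc_self hx)
    rw [Real.norm_eq_abs, abs_abs]
    calc |f'' x| = (|f'' x| ^ q) ^ (1 / q) := by
          rw [one_div, Real.rpow_rpow_inv (abs_nonneg _) hq0.ne']
    _ ≤ _ := Real.rpow_le_rpow (Real.rpow_nonneg (abs_nonneg _) _) h hiq.le
  have hMemF : MemLp (fun x => (x - a) * (m * b - x)) (ENNReal.ofReal p)
      (MeasureTheory.volume.restrict (Set.Ioc a (m * b))) := by
    apply MemLp.of_bound (Continuous.aestronglyMeasurable (by continuity))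
      ((m * b - a) * (m * b - a))
    rw [ae_restrict_iff' measurableSet_Ioc]
    filter_upwards with x hx
    rw [Real.norm_eq_abs,
      abs_of_nonneg (mul_nonneg (by linarith [hx.1.le] : (0:ℝ) ≤ x - a) (by linarith [hx.2]))]
    nlinarith [hx.1, hx.2]
  have hFnn : 0 ≤ᵐ[MeasureTheory.volume.restrict (Set.Ioc a (m * b))]
      (fun x => (x - a) * (m * b - x)) := by
    filter_upwards [ae_restrict_mem measurableSet_Ioc] with x hx
    exact mul_nonneg (by linarith [hx.1.le]) (by linarith [hx.2])
  have hGnn : 0 ≤ᵐ[MeasureTheory.volume.restrict (Set.Ioc a (m * b))] fun x => |f'' x| :=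
    Filter.Eventually.of_forall fun x => abs_nonneg _
  have holder := MeasureTheory.integral_mul_le_Lp_mul_Lq_of_nonneg hcon hFnn hGnn hMemF hMemG
  -- IBP identity
  have hid := ibp_id f f' f'' a (m * b) hamb.le hf hf' hint
  have hEq : (f a + f (m * b)) / 2 - (1 / (m * b - a)) * ∫ x in a..(m * b), f x
      = (1 / (2 * (m * b - a))) * ∫ x in a..(m * b), (x - a) * (m * b - x) * f'' x := by
    rw [hid]; field_simp
  have habsle : |∫ x in a..(m * b), (x - a) * (m * b - x) * f'' x|
      ≤ ∫ x in a..(m * b), (x - a) * (m * b - x) * |f'' x| := by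
    calc |∫ x in a..(m * b), (x - a) * (m * b - x) * f'' x|
        ≤ ∫ x in a..(m * b), |(x - a) * (m * b - x) * f'' x| :=
          intervalIntegral.abs_integral_le_integral_abs hamb.le
    _ = ∫ x in a..(m * b), (x - a) * (m * b - x) * |f'' x| := by
        apply intervalIntegral.integral_congr
        intro x hx
        rw [Set.uIcc_of_le hamb.le] at hx
        dsimp only
        rw [abs_mul, abs_of_nonneg (mul_nonneg (by linarith [hx.1] : (0:ℝ) ≤ x - a)
          (by linarith [hx.2]))]
  -- set notations
  set G := Real.Gamma (1 + p) / Real.Gamma (3 / 2 + p) with hGdef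
  set M := |f'' a| ^ q / (α + 1) + m * |f'' b| ^ q * (α / (α + 1)) with hMdef
  have hG0 : 0 < G := div_pos (Real.Gamma_pos_of_pos (by linarith))
    (Real.Gamma_pos_of_pos (by linarith))
  have hM0 : 0 ≤ M := add_nonneg (div_nonneg hc1 hα1'.le)
    (mul_nonneg (mul_nonneg hm0.le hc2) (div_nonneg hα0 hα1'.le))
  set K := Real.Gamma (1 + p) * Real.Gamma (1 + p) / Real.Gamma (2 + 2 * p) with hKdef
  have hK0 : 0 < K := div_pos (mul_pos (Real.Gamma_pos_of_pos (by linarith))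
    (Real.Gamma_pos_of_pos (by linarith))) (Real.Gamma_pos_of_pos (by linarith))
  -- weight integral value
  have hW : ∫ x in a..(m * b), ((x - a) * (m * b - x)) ^ p = (m * b - a) ^ (2 * p + 1) * K := by
    rw [weight_int hamb hp0, beta_real hp0]
  have hWIoc : ∫ x in Set.Ioc a (m * b), ((x - a) * (m * b - x)) ^ p
      = (m * b - a) ^ (2 * p + 1) * K := by
    rw [← intervalIntegral.integral_of_le hamb.le]; exact hW
  -- duplication formula
  have hdup := Real.Gamma_mul_Gamma_add_half (1 + p)
  rw [show (1 + p + 1 / 2 : ℝ) = 3 / 2 + p by ring, show (2 * (1 + p) : ℝ) = 2 + 2 * p by ring,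
    show (1 - (2 + 2 * p) : ℝ) = -1 - 2 * p by ring] at hdup
  have hKeq : K = (2:ℝ) ^ (-1 - 2 * p) * Real.sqrt Real.pi * G := by
    have h1 : Real.Gamma (2 + 2 * p) ≠ 0 := (Real.Gamma_pos_of_pos (by linarith)).ne'
    have h2 : Real.Gamma (3 / 2 + p) ≠ 0 := (Real.Gamma_pos_of_pos (by linarith)).ne'
    rw [hKdef, hGdef]
    set g1 := Real.Gamma (1 + p) with hg1
    set g2 := Real.Gamma (2 + 2 * p) with hg2
    set g3 := Real.Gamma (3 / 2 + p) with hg3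
    field_simp
    linear_combination g1 * hdup
  have hsqrt : Real.sqrt Real.pi ≤ 2 := by
    rw [show (2:ℝ) = Real.sqrt 4 by
      rw [show (4:ℝ) = 2 ^ 2 by norm_num, Real.sqrt_sq (by norm_num : (0:ℝ) ≤ 2)]]
    exact Real.sqrt_le_sqrt (by nlinarith [Real.pi_lt_d2])
  have hKle : K ≤ (2:ℝ) ^ (-2 * p) * G := by
    rw [hKeq]
    have h2p : (0:ℝ) < (2:ℝ) ^ (-1 - 2 * p) := Real.rpow_pos_of_pos (by norm_num) _
    have h2 : (2:ℝ) ^ (-1 - 2 * p) * Real.sqrt Real.pi ≤ (2:ℝ) ^ (-2 * p) := by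
      calc (2:ℝ) ^ (-1 - 2 * p) * Real.sqrt Real.pi ≤ (2:ℝ) ^ (-1 - 2 * p) * 2 :=
            mul_le_mul_of_nonneg_left hsqrt h2p.le
      _ = (2:ℝ) ^ (-2 * p) := by
          rw [show ((2:ℝ) ^ (-1 - 2 * p) * 2 : ℝ) = (2:ℝ) ^ (-1 - 2 * p) * (2:ℝ) ^ (1:ℝ) by
            rw [Real.rpow_one], ← Real.rpow_add (by norm_num : (0:ℝ) < 2)]
          congr 1
          ring
    exact mul_le_mul_of_nonneg_right h2 hG0.le
  -- second factor bound
  have hTint : IntervalIntegrable (fun x => ((m * b - x) / (m * b - a)) ^ α)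
      MeasureTheory.volume a (m * b) := by
    have h0 : IntervalIntegrable (fun u : ℝ => u ^ α) MeasureTheory.volume 0 1 :=
      intervalIntegral.intervalIntegrable_rpow (Or.inl hα0)
    have h1 := h0.comp_mul_left (c := 1 / (m * b - a))
    rw [zero_div, one_div_one_div] at h1
    have h2 := h1.comp_sub_left (m * b)
    rw [sub_zero, show m * b - (m * b - a) = a by ring] at h2
    have h3 := h2.symm
    simpa only [one_div_mul_eq_div] using h3
  have hq_II : IntervalIntegrable (fun x => |f'' x| ^ q) MeasureTheory.volume a (m * b) := by
    rw [intervalIntegrable_iff, Set.uIoc_of_le hamb.le]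
    refine (MeasureTheory.Integrable.mono'
      (integrable_const (|f'' a| ^ q + m * |f'' b| ^ q))
      ((Real.continuous_rpow_const hq0.le).comp_aestronglyMeasurable habs) ?_ :
        MeasureTheory.Integrable _ _)
    rw [ae_restrict_iff' measurableSet_Ioc]
    filter_upwards with x hx
    rw [Real.norm_eq_abs, abs_of_nonneg (Real.rpow_nonneg (abs_nonneg _) _)]
    exact hCb x (Set.Ioc_subset_Icc_self hx)
  have hhint : IntervalIntegrable (fun x => (|f'' a| ^ q - m * |f'' b| ^ q)
      * ((m * b - x) / (m * b - a)) ^ α + m * |f'' b| ^ q) MeasureTheory.volume a (m * b) :=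
    (hTint.const_mul _).add intervalIntegrable_const
  have hQle : ∫ x in a..(m * b), |f'' x| ^ q ≤ (m * b - a) * M := by
    have hmono := intervalIntegral.integral_mono_on hamb.le hq_II hhint ?_
    · have hR : ∫ x in a..(m * b), ((|f'' a| ^ q - m * |f'' b| ^ q)
          * ((m * b - x) / (m * b - a)) ^ α + m * |f'' b| ^ q)
          = (|f'' a| ^ q - m * |f'' b| ^ q) * ((m * b - a) / (α + 1))
            + (m * b - a) * (m * |f'' b| ^ q) := by
        rw [intervalIntegral.integral_add (hTint.const_mul _) intervalIntegrable_const,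
          intervalIntegral.integral_const_mul, rpow_aux hamb hα0,
          intervalIntegral.integral_const]
        simp [smul_eq_mul]
      rw [hR] at hmono
      calc ∫ x in a..(m * b), |f'' x| ^ q ≤ _ := hmono
      _ = (m * b - a) * M := by rw [hMdef]; field_simp; ring
    · intro x hx
      calc |f'' x| ^ q ≤ _ := hbound x hx
      _ = _ := by ring
  have hQIoc : ∫ x in Set.Ioc a (m * b), |f'' x| ^ q ≤ (m * b - a) * M := by
    rw [← intervalIntegral.integral_of_le hamb.le]; exact hQle
  have hQIocnn : 0 ≤ ∫ x in Set.Ioc a (m * b), |f'' x| ^ q :=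
    MeasureTheory.integral_nonneg fun x => Real.rpow_nonneg (abs_nonneg _) _
  -- exponent arithmetic
  have hexp : (2 * p + 1) * (1 / p) + 1 / q = 3 := by
    have e : (2 * p + 1) * (1 / p) = 2 + 1 / p := by field_simp
    rw [e]; linarith
  have h24 : (2:ℝ) ^ (-2:ℝ) = 1 / 4 := by
    rw [show (-2:ℝ) = ((-2:ℤ):ℝ) by norm_num, Real.rpow_intCast]; norm_num
  have key : ∀ L X Y GP MQ : ℝ, L ≠ 0 → X * Y = L ^ 3 →
      1 / (2 * L) * (X * (1 / 4 * GP) * (Y * MQ)) = L ^ 2 / 8 * GP * MQ := by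
    intro L X Y GP MQ hL0 hXY
    field_simp
    linear_combination 8 * GP * MQ * hXY
  have hXY : (m * b - a) ^ ((2 * p + 1) * (1 / p)) * (m * b - a) ^ (1 / q)
      = (m * b - a) ^ (3:ℕ) := by
    rw [← Real.rpow_add hL, hexp, show (3:ℝ) = ((3:ℕ):ℝ) by norm_num, Real.rpow_natCast]
  have h1 : (∫ x in Set.Ioc a (m * b), ((x - a) * (m * b - x)) ^ p) ^ (1 / p)
      ≤ ((m * b - a) ^ (2 * p + 1) * ((2:ℝ) ^ (-2 * p) * G)) ^ (1 / p) := by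
    apply Real.rpow_le_rpow _ _ hip.le
    · rw [hWIoc]; exact mul_nonneg (Real.rpow_nonneg hL.le _) hK0.le
    · rw [hWIoc]; exact mul_le_mul_of_nonneg_left hKle (Real.rpow_nonneg hL.le _)
  have h2 : (∫ x in Set.Ioc a (m * b), |f'' x| ^ q) ^ (1 / q)
      ≤ ((m * b - a) * M) ^ (1 / q) :=
    Real.rpow_le_rpow hQIocnn hQIoc hiq.le
  have hfinal : (1 / (2 * (m * b - a)))
      * (((m * b - a) ^ (2 * p + 1) * ((2:ℝ) ^ (-2 * p) * G)) ^ (1 / p)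
        * ((m * b - a) * M) ^ (1 / q))
      = (m * b - a) ^ 2 / 8 * G ^ (1 / p) * M ^ (1 / q) := by
    rw [Real.mul_rpow (Real.rpow_nonneg hL.le _)
        (mul_nonneg (Real.rpow_pos_of_pos (by norm_num) _).le hG0.le),
      Real.mul_rpow (Real.rpow_pos_of_pos (by norm_num : (0:ℝ) < 2) _).le hG0.le,
      Real.mul_rpow hL.le hM0,
      ← Real.rpow_mul hL.le, ← Real.rpow_mul (by norm_num : (0:ℝ) ≤ 2),
      show (-2 * p) * (1 / p) = (-2:ℝ) by field_simp, h24]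
    exact key _ _ _ _ _ hL.ne' hXY
  -- main calc
  calc |(f a + f (m * b)) / 2 - (1 / (m * b - a)) * ∫ x in a..(m * b), f x|
      = (1 / (2 * (m * b - a))) * |∫ x in a..(m * b), (x - a) * (m * b - x) * f'' x| := by
        rw [hEq, abs_mul, abs_of_pos (by positivity)]
  _ ≤ (1 / (2 * (m * b - a))) * ∫ x in a..(m * b), (x - a) * (m * b - x) * |f'' x| :=
        mul_le_mul_of_nonneg_left habsle (by positivity)
  _ = (1 / (2 * (m * b - a))) * ∫ x in Set.Ioc a (m * b), (x - a) * (m * b - x) * |f'' x| := by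
        rw [intervalIntegral.integral_of_le hamb.le]
  _ ≤ (1 / (2 * (m * b - a)))
      * ((∫ x in Set.Ioc a (m * b), ((x - a) * (m * b - x)) ^ p) ^ (1 / p)
        * (∫ x in Set.Ioc a (m * b), |f'' x| ^ q) ^ (1 / q)) :=
        mul_le_mul_of_nonneg_left holder (by positivity)
  _ ≤ (1 / (2 * (m * b - a)))
      * (((m * b - a) ^ (2 * p + 1) * ((2:ℝ) ^ (-2 * p) * G)) ^ (1 / p)
        * ((m * b - a) * M) ^ (1 / q)) := by
        apply mul_le_mul_of_nonneg_left _ (by positivity)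
        exact mul_le_mul h1 h2 (Real.rpow_nonneg hQIocnn _)
          (Real.rpow_nonneg (mul_nonneg (Real.rpow_nonneg hL.le _)
            (mul_nonneg (Real.rpow_pos_of_pos (by norm_num) _).le hG0.le)) _)
  _ = ((m * b - a) ^ 2 / 8) * G ^ (1 / p) * M ^ (1 / q) := hfinal
end

section
/- Let f : [0, b*] → ℝ be twice differentiable on an open interval containing [a, mb], 0 ≤ a < b ≤ b*, m ∈ (0,1], a < mb, f'' integrable on [a, mb]. If |f''|^q is (α,m)-convex on [a,b] for (α,m) ∈ [0,1]×(0,1] and q > 1, then |(f(a)+f(mb))/2 − (1/(mb−a))∫_a^{mb} f(x)dx| ≤ ((mb−a)²/2)·( |f''(a)|^q·B(α+1, q+1) + m|f''(b)|^q·(1/(q+1) − B(α+1, q+1)) )^{1/q}, where B is the Beta function. -/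
open MeasureTheory intervalIntegral Set

lemma trap_id (f f' f'' : ℝ → ℝ) (A B : ℝ) (hAB : A < B)
    (hf : ∀ x ∈ Set.Icc A B, HasDerivAt f (f' x) x)
    (hf' : ∀ x ∈ Set.Icc A B, HasDerivAt f' (f'' x) x)
    (hint : IntervalIntegrable f'' MeasureTheory.volume A B) :
    (f A + f B) / 2 - (1 / (B - A)) * ∫ x in A..B, f x
      = ((B - A) ^ 2 / 2) * ∫ t in (0:ℝ)..1, t * (1 - t) * f'' (t * A + (1 - t) * B) := by
  set u : ℝ → ℝ := fun t => t * A + (1 - t) * B with hu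
  have hmem : ∀ t ∈ Set.uIcc (0:ℝ) 1, u t ∈ Set.Icc A B := by
    intro t ht
    rw [Set.uIcc_of_le zero_le_one] at ht
    obtain ⟨h0, h1⟩ := ht
    refine ⟨?_, ?_⟩ <;> simp only [hu] <;> nlinarith
  have hud : ∀ t : ℝ, HasDerivAt u (A - B) t := by
    intro t
    have := ((hasDerivAt_id t).mul_const A).add
      (((hasDerivAt_const t (1:ℝ)).sub (hasDerivAt_id t)).mul_const B)
    exact this.congr_deriv (by ring)
  -- g and its derivatives
  have hg : ∀ t ∈ Set.uIcc (0:ℝ) 1, HasDerivAt (fun t => f (u t)) ((A - B) * f' (u t)) t := by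
    intro t ht
    have := (hf (u t) (hmem t ht)).comp t (hud t)
    rw [mul_comm]; exact this
  have hg' : ∀ t ∈ Set.uIcc (0:ℝ) 1,
      HasDerivAt (fun t => (A - B) * f' (u t)) ((A - B)^2 * f'' (u t)) t := by
    intro t ht
    have := (((hf' (u t) (hmem t ht)).comp t (hud t)).const_mul (A - B))
    simpa [pow_two] using this.congr_deriv (by ring)
  -- integrability of f'' ∘ u
  have hIu : IntervalIntegrable (fun t => f'' (u t)) MeasureTheory.volume 0 1 := by
    have h1 : IntervalIntegrable (fun x => f'' (x + B)) MeasureTheory.volume (A - B) 0 := by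
      simpa using hint.comp_add_right B
    have h2 := h1.comp_mul_left (c := A - B)
    rw [div_self (by linarith : A - B ≠ 0)] at h2
    have h3 : IntervalIntegrable (fun x => f'' ((A - B) * x + B)) MeasureTheory.volume 0 1 := by
      simpa [zero_div] using h2.symm
    have he : (fun t => f'' (u t)) = (fun x => f'' ((A - B) * x + B)) := by
      funext t; simp only [hu]; congr 1; ring
    rw [he]; exact h3
  have hIg'' : IntervalIntegrable (fun t => (A - B)^2 * f'' (u t)) MeasureTheory.volume 0 1 :=
    hIu.const_mul _
  -- continuity of g'
  have hcf' : ContinuousOn f' (Set.Icc A B) := fun x hx => (hf' x hx).continuousAt.continuousWithinAt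
  have hcu : Continuous u := by
    simp only [hu]; continuity
  have hIg' : IntervalIntegrable (fun t => (A - B) * f' (u t)) MeasureTheory.volume 0 1 := by
    apply ContinuousOn.intervalIntegrable
    exact (continuousOn_const.mul (hcf'.comp hcu.continuousOn (fun t ht => hmem t ht)))
  -- first integration by parts
  have ibp1 := intervalIntegral.integral_mul_deriv_eq_deriv_mul
    (u := fun t : ℝ => t * (1 - t)) (u' := fun t : ℝ => 1 - 2 * t)
    (v := fun t => (A - B) * f' (u t)) (v' := fun t => (A - B)^2 * f'' (u t))
    (a := (0:ℝ)) (b := 1)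
    (fun t _ => by
      have h := ((hasDerivAt_id t).mul ((hasDerivAt_const t (1:ℝ)).sub (hasDerivAt_id t)))
      refine h.congr_deriv ?_
      simp only [Pi.sub_apply, id_eq]
      ring)
    hg' ((by fun_prop : Continuous fun t : ℝ => 1 - 2 * t).intervalIntegrable _ _) hIg''
  have ibp2 := intervalIntegral.integral_mul_deriv_eq_deriv_mul
    (u := fun t : ℝ => 1 - 2 * t) (u' := fun t : ℝ => -2)
    (v := fun t => f (u t)) (v' := fun t => (A - B) * f' (u t))
    (a := (0:ℝ)) (b := 1)
    (fun t _ => by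
      have h := (hasDerivAt_const t (1:ℝ)).sub ((hasDerivAt_id t).const_mul (2:ℝ))
      refine h.congr_deriv ?_
      norm_num)
    hg (continuous_const.intervalIntegrable _ _)
    (by apply ContinuousOn.intervalIntegrable
        exact continuousOn_const.mul (hcf'.comp hcu.continuousOn (fun t ht => hmem t ht)))
  -- substitution for ∫ g
  have hsub : ∫ t in (0:ℝ)..1, f (u t) = (B - A)⁻¹ * ∫ x in A..B, f x := by
    have he : (fun t => f (u t)) = (fun x => f ((A - B) * x + B)) := by
      funext t; simp only [hu]; congr 1; ring
    rw [he, intervalIntegral.integral_comp_mul_add f (by linarith : A - B ≠ 0) B]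
    rw [smul_eq_mul]
    rw [show (A - B) * 0 + B = B by ring, show (A - B) * 1 + B = A by ring]
    rw [intervalIntegral.integral_symm]
    have h1 : A - B ≠ 0 := sub_ne_zero_of_ne (ne_of_lt hAB)
    have h2 : B - A ≠ 0 := sub_ne_zero_of_ne (ne_of_gt hAB)
    field_simp
    ring
  have hK : ∫ t in (0:ℝ)..1, t * (1 - t) * ((A - B)^2 * f'' (u t))
      = (A - B)^2 * ∫ t in (0:ℝ)..1, t * (1 - t) * f'' (u t) := by
    rw [← intervalIntegral.integral_const_mul]
    apply intervalIntegral.integral_congr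
    intro t _; ring
  have hm2 : ∫ t in (0:ℝ)..1, (-2 : ℝ) * f (u t) = -2 * ∫ t in (0:ℝ)..1, f (u t) :=
    intervalIntegral.integral_const_mul _ _
  rw [hK] at ibp1
  rw [hm2, hsub] at ibp2
  simp only [hu] at ibp1 ibp2 ⊢
  have hBA : B - A ≠ 0 := by linarith
  field_simp at ibp1 ibp2 ⊢
  simp only [sub_self, zero_mul, mul_zero, mul_one, add_zero, sub_zero, zero_add] at ibp1 ibp2
  linear_combination ibp2 - (B - A) * ibp1

lemma comp_affine_II (f : ℝ → ℝ) (A B : ℝ) (hAB : A ≠ B)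
    (hint : IntervalIntegrable f MeasureTheory.volume A B) :
    IntervalIntegrable (fun t => f (t * A + (1 - t) * B)) MeasureTheory.volume 0 1 := by
  have h1 : IntervalIntegrable (fun x => f (x + B)) MeasureTheory.volume (A - B) 0 := by
    simpa using hint.comp_add_right B
  have h2 := h1.comp_mul_left (c := A - B)
  rw [div_self (sub_ne_zero_of_ne hAB)] at h2
  have h3 : IntervalIntegrable (fun x => f ((A - B) * x + B)) MeasureTheory.volume 0 1 := by
    simpa [zero_div] using h2.symm
  have he : (fun t => f (t * A + (1 - t) * B)) = (fun x => f ((A - B) * x + B)) := by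
    funext t; congr 1; ring
  rw [he]; exact h3

noncomputable def betaFn (x y : ℝ) : ℝ := ∫ t in (0:ℝ)..1, t ^ (x - 1) * (1 - t) ^ (y - 1)

theorem thm23
    (f f' f'' : ℝ → ℝ) (a b bstar m α q : ℝ)
    (hb : b ≤ bstar) (hbstar : 0 < bstar)
    (ha : 0 ≤ a) (hab : a < b) (hm : m ∈ Set.Ioc (0:ℝ) 1) (hα : α ∈ Set.Icc (0:ℝ) 1)
    (hamb : a < m * b) (hq : 1 < q)
    (hf : ∀ x ∈ Set.Icc a (m * b), HasDerivAt f (f' x) x)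
    (hf' : ∀ x ∈ Set.Icc a (m * b), HasDerivAt f' (f'' x) x)
    (hint : IntervalIntegrable f'' MeasureTheory.volume a (m * b))
    (hconv : ∀ x ∈ Set.Icc a b, ∀ y ∈ Set.Icc a b, ∀ t ∈ Set.Icc (0:ℝ) 1,
      |f'' (t * x + m * (1 - t) * y)| ^ q
        ≤ t ^ α * |f'' x| ^ q + m * (1 - t ^ α) * |f'' y| ^ q) :
    |(f a + f (m * b)) / 2 - (1 / (m * b - a)) * ∫ x in a..(m * b), f x|
      ≤ ((m * b - a) ^ 2 / 2) *
        (|f'' a| ^ q * betaFn (α + 1) (q + 1)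
          + m * |f'' b| ^ q * (1 / (q + 1) - betaFn (α + 1) (q + 1))) ^ (1 / q) := by
  obtain ⟨hm0, hm1⟩ := hm
  obtain ⟨hα0, hα1⟩ := hα
  have hq0 : (0:ℝ) < q := by linarith
  have hqne : q ≠ 0 := ne_of_gt hq0
  set B : ℝ := m * b with hB
  set A' : ℝ := |f'' a| ^ q with hA'
  set C' : ℝ := |f'' b| ^ q with hC'
  have hA'0 : 0 ≤ A' := Real.rpow_nonneg (abs_nonneg _) q
  have hC'0 : 0 ≤ C' := Real.rpow_nonneg (abs_nonneg _) q
  set ψ : ℝ → ℝ := fun t => t ^ α * A' + m * (1 - t ^ α) * C' with hψ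
  set φ : ℝ → ℝ := fun t => ψ t ^ (1/q) with hφ
  set D : ℝ := A' * betaFn (α + 1) (q + 1) + m * C' * (1 / (q + 1) - betaFn (α + 1) (q + 1))
    with hD
  -- bounds on ψ
  have hψ01 : ∀ t ∈ Set.Icc (0:ℝ) 1, 0 ≤ ψ t ∧ ψ t ≤ A' + m * C' := by
    intro t ht
    have h1 : 0 ≤ t ^ α := Real.rpow_nonneg ht.1 α
    have h2 : t ^ α ≤ 1 := Real.rpow_le_one ht.1 ht.2 hα0
    have e0 : 0 ≤ t ^ α * A' := mul_nonneg h1 hA'0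
    have e0' : 0 ≤ m * (1 - t ^ α) * C' :=
      mul_nonneg (mul_nonneg hm0.le (by linarith)) hC'0
    have e1 : t ^ α * A' ≤ A' := by nlinarith
    have e2 : m * (1 - t ^ α) * C' ≤ m * C' := by nlinarith [mul_nonneg (mul_nonneg hm0.le h1) hC'0]
    refine ⟨?_, ?_⟩ <;> simp only [hψ] <;> linarith
  -- continuity of ψ and φ on [0,1]
  have hψcont : ContinuousOn ψ (Set.Icc (0:ℝ) 1) := by
    apply ContinuousOn.add
    · exact (continuousOn_id.rpow_const (fun x _ => Or.inr hα0)).mul continuousOn_const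
    · exact (continuousOn_const.mul (continuousOn_const.sub
        (continuousOn_id.rpow_const (fun x _ => Or.inr hα0)))).mul continuousOn_const
  have hφcont : ContinuousOn φ (Set.Icc (0:ℝ) 1) :=
    hψcont.rpow_const (fun x _ => Or.inr (by positivity))
  have huicc : Set.uIcc (0:ℝ) 1 = Set.Icc (0:ℝ) 1 := Set.uIcc_of_le zero_le_one
  have hIφ : IntervalIntegrable φ MeasureTheory.volume 0 1 := by
    apply ContinuousOn.intervalIntegrable; rwa [huicc]
  -- integrability of f'' ∘ u
  have hIu : IntervalIntegrable (fun t => f'' (t * a + (1 - t) * B))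
      MeasureTheory.volume 0 1 := comp_affine_II f'' a B (ne_of_lt hamb) hint
  -- pointwise bound
  have hpt : ∀ t ∈ Set.Icc (0:ℝ) 1, |f'' (t * a + (1 - t) * B)| ≤ φ t := by
    intro t ht
    have hc := hconv a ⟨le_refl a, hab.le⟩ b ⟨hab.le, le_refl b⟩ t ht
    have hpeq : t * a + m * (1 - t) * b = t * a + (1 - t) * B := by rw [hB]; ring
    rw [hpeq] at hc
    have h1 : |f'' (t * a + (1 - t) * B)|
        = (|f'' (t * a + (1 - t) * B)| ^ q) ^ (1/q) := by
      rw [← Real.rpow_mul (abs_nonneg _), mul_one_div, div_self hqne, Real.rpow_one]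
    rw [h1]
    have := Real.rpow_le_rpow (Real.rpow_nonneg (abs_nonneg _) q) hc
      (le_of_lt (by positivity : (0:ℝ) < 1/q))
    exact this
  -- abbreviations
  set G : ℝ → ℝ := fun t => (1 - t) * φ t with hG
  set μ : MeasureTheory.Measure ℝ := MeasureTheory.volume.restrict (Set.Ioc (0:ℝ) 1) with hμ
  haveI : MeasureTheory.IsFiniteMeasure μ := by
    constructor
    rw [hμ, MeasureTheory.Measure.restrict_apply_univ, Real.volume_Ioc]
    simp
  set p : ℝ := Real.conjExponent q with hp
  have hpq : p.HolderConjugate q := (Real.HolderConjugate.conjExponent hq).symm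
  have hp1 : 1 < p := hpq.lt
  -- Memℒp facts
  have hsub : Set.Ioc (0:ℝ) 1 ⊆ Set.Icc (0:ℝ) 1 := Set.Ioc_subset_Icc_self
  have hFmem : MeasureTheory.MemLp (fun t : ℝ => t) (ENNReal.ofReal p) μ := by
    apply MeasureTheory.MemLp.of_bound measurable_id.aestronglyMeasurable 1
    rw [hμ, MeasureTheory.ae_restrict_iff' measurableSet_Ioc]
    exact MeasureTheory.ae_of_all _ (fun t ht => by
      simp only [Real.norm_eq_abs, id_eq]
      rw [abs_of_nonneg ht.1.le]; exact ht.2)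
  have hφbd : ∀ t ∈ Set.Icc (0:ℝ) 1, 0 ≤ φ t ∧ φ t ≤ (A' + m * C') ^ (1/q) := by
    intro t ht
    obtain ⟨h0, h1⟩ := hψ01 t ht
    exact ⟨Real.rpow_nonneg h0 _, Real.rpow_le_rpow h0 h1 (by positivity)⟩
  have hGmeas : MeasureTheory.AEStronglyMeasurable G μ := by
    rw [hμ]
    exact ((continuousOn_const.sub continuousOn_id).mul (hφcont.mono hsub)).aestronglyMeasurable
      measurableSet_Ioc
  have hGmem : MeasureTheory.MemLp G (ENNReal.ofReal q) μ := by
    apply MeasureTheory.MemLp.of_bound hGmeas ((A' + m * C') ^ (1/q))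
    rw [hμ, MeasureTheory.ae_restrict_iff' measurableSet_Ioc]
    apply MeasureTheory.ae_of_all _ (fun t ht => ?_)
    obtain ⟨hφ0, hφ1⟩ := hφbd t (hsub ht)
    have h1t : 0 ≤ 1 - t := by linarith [ht.2]
    rw [hG, Real.norm_eq_abs, abs_of_nonneg (mul_nonneg h1t hφ0)]
    calc (1 - t) * φ t ≤ 1 * φ t := mul_le_mul_of_nonneg_right (by linarith [ht.1]) hφ0
    _ = φ t := one_mul _
    _ ≤ _ := hφ1
  have hFnn : 0 ≤ᵐ[μ] (fun t : ℝ => t) := by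
    rw [hμ]
    filter_upwards [MeasureTheory.ae_restrict_mem measurableSet_Ioc] with t ht
    exact ht.1.le
  have hGnn : 0 ≤ᵐ[μ] G := by
    rw [hμ]
    filter_upwards [MeasureTheory.ae_restrict_mem measurableSet_Ioc] with t ht
    exact mul_nonneg (by linarith [ht.2]) (hφbd t (hsub ht)).1
  have hH := MeasureTheory.integral_mul_le_Lp_mul_Lq_of_nonneg hpq hFnn hGnn hFmem hGmem
  -- compute ∫ t^p
  have hFp : ∫ t : ℝ, t ^ p ∂μ = 1 / (p + 1) := by
    rw [hμ]
    have : ∫ t in Set.Ioc (0:ℝ) 1, t ^ p = ∫ t in (0:ℝ)..1, t ^ p :=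
      (intervalIntegral.integral_of_le zero_le_one).symm
    rw [this, integral_rpow (Or.inl (by linarith))]
    rw [Real.one_rpow, Real.zero_rpow (by positivity : p + 1 ≠ 0)]
    ring
  -- compute ∫ G^q
  have hcq : ContinuousOn (fun t : ℝ => (1 - t) ^ q) (Set.uIcc (0:ℝ) 1) :=
    (continuousOn_const.sub continuousOn_id).rpow_const (fun x _ => Or.inr hq0.le)
  have hI1 : IntervalIntegrable (fun t : ℝ => t ^ α * (1 - t) ^ q)
      MeasureTheory.volume 0 1 :=
    (intervalIntegrable_rpow' (by linarith)).mul_continuousOn hcq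
  have hI2 : IntervalIntegrable (fun t : ℝ => (1 - t) ^ q) MeasureTheory.volume 0 1 :=
    hcq.intervalIntegrable
  have hIval1 : ∫ t in (0:ℝ)..1, t ^ α * (1 - t) ^ q = betaFn (α + 1) (q + 1) := by
    rw [betaFn]
    norm_num
  have hIval2 : ∫ t in (0:ℝ)..1, (1 - t) ^ q = 1 / (q + 1) := by
    rw [show (fun t : ℝ => (1 - t) ^ q) = fun t : ℝ => (fun x : ℝ => x ^ q) (1 - t) from rfl]
    rw [intervalIntegral.integral_comp_sub_left (fun x : ℝ => x ^ q) 1]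
    norm_num
    rw [integral_rpow (Or.inl (by linarith))]
    rw [Real.one_rpow, Real.zero_rpow (by positivity : q + 1 ≠ 0)]
    ring
  have hGq : ∫ t : ℝ, G t ^ q ∂μ = D := by
    rw [hμ]
    have step1 : ∫ t in Set.Ioc (0:ℝ) 1, G t ^ q
        = ∫ t in Set.Ioc (0:ℝ) 1, (1 - t) ^ q * ψ t := by
      apply MeasureTheory.setIntegral_congr_fun measurableSet_Ioc
      intro t ht
      have h1t : (0:ℝ) ≤ 1 - t := by linarith [ht.2]
      have hψt : 0 ≤ ψ t := (hψ01 t (hsub ht)).1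
      show G t ^ q = _
      rw [hG, hφ]
      show ((1 - t) * ψ t ^ (1/q)) ^ q = _
      rw [Real.mul_rpow h1t (Real.rpow_nonneg hψt _),
        ← Real.rpow_mul hψt, one_div_mul_cancel hqne, Real.rpow_one]
    rw [step1, ← intervalIntegral.integral_of_le zero_le_one]
    have step2 : ∫ t in (0:ℝ)..1, (1 - t) ^ q * ψ t
        = ∫ t in (0:ℝ)..1, (A' * (t ^ α * (1 - t) ^ q)
            + (m * C' * ((1 - t) ^ q) - m * C' * (t ^ α * (1 - t) ^ q))) := by
      apply intervalIntegral.integral_congr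
      intro t _
      simp only [hψ]
      ring
    rw [step2, intervalIntegral.integral_add (hI1.const_mul A')
        ((hI2.const_mul _).sub (hI1.const_mul _)),
      intervalIntegral.integral_sub (hI2.const_mul _) (hI1.const_mul _),
      intervalIntegral.integral_const_mul, intervalIntegral.integral_const_mul,
      intervalIntegral.integral_const_mul, hIval1, hIval2, hD]
    ring
  have hD0 : 0 ≤ D := by
    rw [← hGq, hμ]
    apply MeasureTheory.setIntegral_nonneg measurableSet_Ioc
    intro t ht
    apply Real.rpow_nonneg
    exact mul_nonneg (by linarith [ht.2]) (hφbd t (hsub ht)).1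
  -- rewrite goal via the trapezoid identity
  rw [trap_id f f' f'' a B hamb hf hf' hint, abs_mul,
    abs_of_nonneg (by positivity : (0:ℝ) ≤ (B - a) ^ 2 / 2)]
  apply mul_le_mul_of_nonneg_left ?_ (by positivity)
  -- chain of inequalities
  have hKnn : ∀ t ∈ Set.Icc (0:ℝ) 1, 0 ≤ t * (1 - t) := by
    intro t ht; nlinarith [ht.1, ht.2]
  have hIKf : IntervalIntegrable (fun t => t * (1 - t) * |f'' (t * a + (1 - t) * B)|)
      MeasureTheory.volume 0 1 := by
    have := hIu.norm.continuousOn_mul (g := fun t : ℝ => t * (1 - t))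
      ((continuous_id.mul (continuous_const.sub continuous_id)).continuousOn)
    simpa [Real.norm_eq_abs, mul_assoc] using this
  have hIKφ : IntervalIntegrable (fun t => t * (1 - t) * φ t) MeasureTheory.volume 0 1 := by
    have := hIφ.continuousOn_mul (g := fun t : ℝ => t * (1 - t))
      ((continuous_id.mul (continuous_const.sub continuous_id)).continuousOn)
    simpa [mul_assoc] using this
  calc |∫ t in (0:ℝ)..1, t * (1 - t) * f'' (t * a + (1 - t) * B)|
      ≤ ∫ t in (0:ℝ)..1, |t * (1 - t) * f'' (t * a + (1 - t) * B)| :=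
        intervalIntegral.abs_integral_le_integral_abs zero_le_one
    _ = ∫ t in (0:ℝ)..1, t * (1 - t) * |f'' (t * a + (1 - t) * B)| := by
        apply intervalIntegral.integral_congr
        intro t ht
        rw [huicc] at ht
        show |t * (1 - t) * f'' (t * a + (1 - t) * B)| = t * (1 - t) * |f'' (t * a + (1 - t) * B)|
        rw [abs_mul, abs_of_nonneg (hKnn t ht)]
    _ ≤ ∫ t in (0:ℝ)..1, t * (1 - t) * φ t := by
        apply intervalIntegral.integral_mono_on zero_le_one hIKf hIKφ
        intro t ht
        exact mul_le_mul_of_nonneg_left (hpt t ht) (hKnn t ht)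
    _ = ∫ t : ℝ, t * G t ∂μ := by
        rw [hμ, intervalIntegral.integral_of_le zero_le_one]
        apply MeasureTheory.setIntegral_congr_fun measurableSet_Ioc
        intro t _
        show t * (1 - t) * φ t = t * G t
        rw [hG]; ring
    _ ≤ (∫ t : ℝ, t ^ p ∂μ) ^ (1/p) * (∫ t : ℝ, G t ^ q ∂μ) ^ (1/q) := hH
    _ ≤ 1 * D ^ (1/q) := by
        rw [hGq]
        apply mul_le_mul_of_nonneg_right ?_ (Real.rpow_nonneg hD0 _)
        rw [hFp]
        apply Real.rpow_le_one (by positivity) ?_ (by positivity)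
        rw [div_le_one (by linarith)]
        linarith
    _ = D ^ (1/q) := one_mul _
end

section
/- Let f : [0, b*] → ℝ be twice differentiable on an open interval containing [a, mb], 0 ≤ a < b ≤ b*, m ∈ (0,1], a < mb, f'' integrable on [a, mb]. If |f''|^q is (α,m)-convex on [a,b] for (α,m) ∈ [0,1]×(0,1] and q ≥ 1, then |(f(a)+f(mb))/2 − (1/(mb−a))∫_a^{mb} f(x)dx| ≤ ((mb−a)²/2)·(1/2)^{1−1/q}·( |f''(a)|^q·B(α+2, q+1) + m|f''(b)|^q·(1/((q+1)(q+2)) − B(α+2, q+1)) )^{1/q}, where B is the Beta function. -/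
open MeasureTheory intervalIntegral Set
section helpers


lemma ibp_identity (f f' f'' : ℝ → ℝ) (a c : ℝ) (hac : a < c)
    (hf : ∀ x ∈ Set.Icc a c, HasDerivAt f (f' x) x)
    (hf' : ∀ x ∈ Set.Icc a c, HasDerivAt f' (f'' x) x)
    (hint : IntervalIntegrable f'' MeasureTheory.volume a c) :
    ∫ x in a..c, (x - a) * (c - x) * f'' x
      = (c - a) * (f a + f c) - 2 * ∫ x in a..c, f x := by
  have huIcc : Set.uIcc a c = Set.Icc a c := Set.uIcc_of_le hac.le
  have hfc : ContinuousOn f (Set.Icc a c) := fun x hx => (hf x hx).continuousAt.continuousWithinAt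
  have hf'c : ContinuousOn f' (Set.Icc a c) := fun x hx => (hf' x hx).continuousAt.continuousWithinAt
  have hf'int : IntervalIntegrable f' volume a c := by
    apply ContinuousOn.intervalIntegrable; rwa [huIcc]
  have hfint : IntervalIntegrable f volume a c := by
    apply ContinuousOn.intervalIntegrable; rwa [huIcc]
  have hu : ∀ x ∈ Set.uIcc a c, HasDerivAt (fun x => (x - a) * (c - x)) (a + c - 2 * x) x := by
    intro x _
    have h := ((hasDerivAt_id x).sub_const a).mul ((hasDerivAt_const x c).sub (hasDerivAt_id x))
    exact h.congr_deriv (by simp [id_eq]; ring)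
  have h1 : ∫ x in a..c, (x - a) * (c - x) * f'' x
      = (c - a) * (c - c) * f' c - (a - a) * (c - a) * f' a
        - ∫ x in a..c, (a + c - 2 * x) * f' x := by
    exact integral_mul_deriv_eq_deriv_mul hu (by rwa [huIcc]) (by
      apply ContinuousOn.intervalIntegrable; fun_prop) hint
  have hu2 : ∀ x ∈ Set.uIcc a c, HasDerivAt (fun x => a + c - 2 * x) (-2 : ℝ) x := by
    intro x _
    have h := (hasDerivAt_const x (a + c)).sub ((hasDerivAt_id x).const_mul 2)
    exact h.congr_deriv (by simp [id_eq])
  have h2 : ∫ x in a..c, (a + c - 2 * x) * f' x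
      = (a + c - 2 * c) * f c - (a + c - 2 * a) * f a - ∫ x in a..c, (-2 : ℝ) * f x := by
    exact integral_mul_deriv_eq_deriv_mul hu2 (by rwa [huIcc]) (by
      apply ContinuousOn.intervalIntegrable; fun_prop) hf'int
  rw [h1, h2, intervalIntegral.integral_const_mul]
  ring


lemma subst_lemma (F : ℝ → ℝ) (a c : ℝ) (hac : a < c) :
    ∫ t in (0:ℝ)..1, t * (1 - t) * F (c - (c - a) * t)
      = ((c - a) ^ 3)⁻¹ * ∫ x in a..c, (x - a) * (c - x) * F x := by
  have hne : c - a ≠ 0 := sub_ne_zero.2 hac.ne'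
  have key := intervalIntegral.integral_comp_sub_mul (a := 0) (b := 1)
    (fun x => ((c - a) ^ 2)⁻¹ * ((x - a) * (c - x) * F x)) hne c
  simp only [show c - (c - a) * 1 = a by ring, show c - (c - a) * 0 = c by ring,
    smul_eq_mul] at key
  have congr1 : ∫ t in (0:ℝ)..1, t * (1 - t) * F (c - (c - a) * t)
      = ∫ t in (0:ℝ)..1, ((c - a) ^ 2)⁻¹ *
          ((c - (c - a) * t - a) * (c - (c - (c - a) * t)) * F (c - (c - a) * t)) := by
    apply intervalIntegral.integral_congr
    intro t _
    field_simp
    ring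
  have hc3 : (c - a)⁻¹ * ((c - a) ^ 2)⁻¹ = ((c - a) ^ 3)⁻¹ := by
    rw [← mul_inv]; ring_nf
  rw [congr1, key, intervalIntegral.integral_const_mul, ← mul_assoc, hc3]


lemma hoelder01 (g : ℝ → ℝ) (q : ℝ) (hq : 1 ≤ q)
    (hmeas : AEStronglyMeasurable g (volume.restrict (Set.Ioc (0:ℝ) 1)))
    (hg0 : ∀ t ∈ Set.Ioc (0:ℝ) 1, 0 ≤ g t)
    (C : ℝ) (hgC : ∀ t ∈ Set.Ioc (0:ℝ) 1, g t ≤ C) :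
    ∫ t in (0:ℝ)..1, t * (1 - t) * g t
      ≤ (1/2 : ℝ) ^ (1 - 1/q) * (∫ t in (0:ℝ)..1, t * (1 - t) ^ q * g t ^ q) ^ (1/q) := by
  rcases eq_or_lt_of_le hq with h1 | h1
  · subst h1
    norm_num [Real.rpow_one]
  -- now 1 < q
  set p := Real.conjExponent q with hp
  have hpq : p.HolderConjugate q := (Real.HolderConjugate.conjExponent h1).symm
  have hp1 : 1 < p := hpq.lt
  have hq0 : (0:ℝ) < q := lt_trans one_pos h1
  have hsum : 1/p + 1/q = 1 := by
    rw [one_div, one_div]; exact hpq.inv_add_inv_eq_one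
  have hpinv : 1/p = 1 - 1/q := by linarith
  set μ := volume.restrict (Set.Ioc (0:ℝ) 1) with hμ
  have hfin : IsFiniteMeasure μ := by
    constructor
    rw [hμ, Measure.restrict_apply_univ, Real.volume_Ioc]
    exact ENNReal.ofReal_lt_top
  set F : ℝ → ℝ := fun t => t ^ (1/p) with hF
  set G : ℝ → ℝ := fun t => t ^ (1/q) * (1 - t) * g t with hG
  have hFmeas : AEStronglyMeasurable F μ :=
    (Real.continuous_rpow_const (by positivity)).aestronglyMeasurable
  have hGmeas : AEStronglyMeasurable G μ :=
    ((Real.continuous_rpow_const (by positivity)).mul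
      (continuous_const.sub continuous_id)).aestronglyMeasurable.mul hmeas
  have hC0 : 0 ≤ C := le_trans (hg0 1 (by norm_num)) (hgC 1 (by norm_num))
  have hFbd : MemLp F (ENNReal.ofReal p) μ := by
    apply MemLp.of_bound hFmeas 1
    rw [hμ, ae_restrict_iff' measurableSet_Ioc]
    refine ae_of_all _ fun t ht => ?_
    rw [Real.norm_eq_abs, abs_of_nonneg (Real.rpow_nonneg ht.1.le _)]
    exact Real.rpow_le_one ht.1.le ht.2 (by positivity)
  have hGbd : MemLp G (ENNReal.ofReal q) μ := by
    apply MemLp.of_bound hGmeas C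
    rw [hμ, ae_restrict_iff' measurableSet_Ioc]
    refine ae_of_all _ fun t ht => ?_
    have h01 : t ^ (1/q) * (1 - t) ≤ 1 := by
      apply mul_le_one₀ (Real.rpow_le_one ht.1.le ht.2 (by positivity)) (by linarith [ht.2])
      linarith [ht.1]
    have hnn : 0 ≤ t ^ (1/q) * (1 - t) :=
      mul_nonneg (Real.rpow_nonneg ht.1.le _) (by linarith [ht.2])
    rw [Real.norm_eq_abs, hG, abs_of_nonneg (by exact mul_nonneg hnn (hg0 t ht))]
    calc t ^ (1/q) * (1 - t) * g t ≤ 1 * g t :=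
          mul_le_mul_of_nonneg_right h01 (hg0 t ht)
      _ = g t := one_mul _
      _ ≤ C := hgC t ht
  have hF0 : 0 ≤ᵐ[μ] F := by
    filter_upwards [ae_restrict_mem measurableSet_Ioc] with t ht
    exact Real.rpow_nonneg ht.1.le _
  have hG0 : 0 ≤ᵐ[μ] G := by
    filter_upwards [ae_restrict_mem measurableSet_Ioc] with t ht
    exact mul_nonneg (mul_nonneg (Real.rpow_nonneg ht.1.le _) (by linarith [ht.2])) (hg0 t ht)
  have key := integral_mul_le_Lp_mul_Lq_of_nonneg hpq hF0 hG0 hFbd hGbd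
  have e1 : ∫ t, F t * G t ∂μ = ∫ t in (0:ℝ)..1, t * (1 - t) * g t := by
    rw [intervalIntegral.integral_of_le zero_le_one, hμ]
    apply setIntegral_congr_fun measurableSet_Ioc
    intro t ht
    simp only [hF, hG]
    rw [← mul_assoc, ← mul_assoc, ← Real.rpow_add ht.1, hsum, Real.rpow_one]
  have hp0 : (0:ℝ) < p := lt_trans one_pos hp1
  have hpow : ∀ t : ℝ, 0 < t → ∀ r : ℝ, 0 < r → (t ^ (1/r)) ^ r = t := by
    intro t ht r hr
    rw [← Real.rpow_mul ht.le, one_div, inv_mul_cancel₀ (ne_of_gt hr), Real.rpow_one]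
  have e2 : ∫ t, F t ^ p ∂μ = 1/2 := by
    have h : ∫ t, F t ^ p ∂μ = ∫ t in (0:ℝ)..1, t := by
      rw [intervalIntegral.integral_of_le zero_le_one, hμ]
      apply setIntegral_congr_fun measurableSet_Ioc
      intro t ht
      simp only [hF]
      exact hpow t ht.1 p hp0
    rw [h, integral_id]
    norm_num
  have e3 : ∫ t, G t ^ q ∂μ = ∫ t in (0:ℝ)..1, t * (1 - t) ^ q * g t ^ q := by
    rw [intervalIntegral.integral_of_le zero_le_one, hμ]
    apply setIntegral_congr_fun measurableSet_Ioc
    intro t ht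
    simp only [hG]
    rw [Real.mul_rpow (mul_nonneg (Real.rpow_nonneg ht.1.le _) (by linarith [ht.2])) (hg0 t ht),
      Real.mul_rpow (Real.rpow_nonneg ht.1.le _) (by linarith [ht.2] : (0:ℝ) ≤ 1 - t),
      hpow t ht.1 q hq0]
  rw [e1, e2, e3] at key
  rwa [hpinv] at key


lemma integrableOn01 (h : ℝ → ℝ)
    (hm : AEStronglyMeasurable h (volume.restrict (Set.Ioc (0:ℝ) 1))) (C : ℝ)
    (hb : ∀ t ∈ Set.Ioc (0:ℝ) 1, |h t| ≤ C) : IntervalIntegrable h volume 0 1 := by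
  rw [intervalIntegrable_iff_integrableOn_Ioc_of_le zero_le_one]
  apply Integrable.mono' (integrable_const C) hm
  filter_upwards [ae_restrict_mem measurableSet_Ioc] with t ht
  simpa using hb t ht

lemma rpow01 (r : ℝ) (hr : (-1:ℝ) < r) : ∫ t in (0:ℝ)..1, t ^ r = 1 / (r + 1) := by
  rw [integral_rpow (Or.inl hr)]
  rw [Real.one_rpow, Real.zero_rpow (by linarith)]
  norm_num

lemma beta1 (α q : ℝ) (hα : 0 ≤ α) (hq : 1 ≤ q) :
    ∫ t in (0:ℝ)..1, t * (1 - t) ^ q * t ^ α = betaFn (α + 2) (q + 1) := by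
  rw [betaFn, show α + 2 - 1 = α + 1 by ring, show q + 1 - 1 = q by ring]
  rw [intervalIntegral.integral_of_le zero_le_one, intervalIntegral.integral_of_le zero_le_one]
  apply setIntegral_congr_fun measurableSet_Ioc
  intro t ht
  simp only
  rw [Real.rpow_add ht.1, Real.rpow_one]
  ring

lemma beta2 (q : ℝ) (hq : 1 ≤ q) :
    ∫ t in (0:ℝ)..1, t * (1 - t) ^ q = 1 / ((q + 1) * (q + 2)) := by
  have hq0 : (0:ℝ) < q := by linarith
  have key := intervalIntegral.integral_comp_sub_left (a := (0:ℝ)) (b := 1)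
    (fun u => (1 - u) * u ^ q) 1
  norm_num at key
  have e1 : ∫ t in (0:ℝ)..1, t * (1 - t) ^ q
      = ∫ u in (0:ℝ)..1, (1 - u) * u ^ q := key
  have e2 : ∫ u in (0:ℝ)..1, (1 - u) * u ^ q
      = (∫ u in (0:ℝ)..1, u ^ q) - ∫ u in (0:ℝ)..1, u ^ (q + 1) := by
    rw [← intervalIntegral.integral_sub (intervalIntegrable_rpow' (by linarith))
      (intervalIntegrable_rpow' (by linarith))]
    rw [intervalIntegral.integral_of_le zero_le_one, intervalIntegral.integral_of_le zero_le_one]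
    apply setIntegral_congr_fun measurableSet_Ioc
    intro u hu
    simp only
    rw [Real.rpow_add hu.1, Real.rpow_one]
    ring
  rw [e1, e2, rpow01 q (by linarith), rpow01 (q + 1) (by linarith)]
  have h1 : q + 1 ≠ 0 := by positivity
  have h2 : q + 2 ≠ 0 := by positivity
  rw [show q + 1 + 1 = q + 2 by ring, div_sub_div _ _ h1 h2, show 1 * (q + 2) - (q + 1) * 1 = 1 by ring]

end helpers

theorem thm24
    (f f' f'' : ℝ → ℝ) (a b bstar m α q : ℝ)
    (hb : b ≤ bstar) (hbstar : 0 < bstar)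
    (ha : 0 ≤ a) (hab : a < b) (hm : m ∈ Set.Ioc (0:ℝ) 1) (hα : α ∈ Set.Icc (0:ℝ) 1)
    (hamb : a < m * b) (hq : 1 ≤ q)
    (hf : ∀ x ∈ Set.Icc a (m * b), HasDerivAt f (f' x) x)
    (hf' : ∀ x ∈ Set.Icc a (m * b), HasDerivAt f' (f'' x) x)
    (hint : IntervalIntegrable f'' MeasureTheory.volume a (m * b))
    (hconv : ∀ x ∈ Set.Icc a b, ∀ y ∈ Set.Icc a b, ∀ t ∈ Set.Icc (0:ℝ) 1,
      |f'' (t * x + m * (1 - t) * y)| ^ q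
        ≤ t ^ α * |f'' x| ^ q + m * (1 - t ^ α) * |f'' y| ^ q) :
    |(f a + f (m * b)) / 2 - (1 / (m * b - a)) * ∫ x in a..(m * b), f x|
      ≤ ((m * b - a) ^ 2 / 2) * (1 / 2 : ℝ) ^ (1 - 1 / q) *
        (|f'' a| ^ q * betaFn (α + 2) (q + 1)
          + m * |f'' b| ^ q * (1 / ((q + 1) * (q + 2)) - betaFn (α + 2) (q + 1))) ^ (1 / q) := by
  have hq0 : (0:ℝ) < q := lt_of_lt_of_le one_pos hq
  set c : ℝ := m * b with hc
  have hca : (0:ℝ) < c - a := sub_pos.2 hamb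
  have hcane : c - a ≠ 0 := ne_of_gt hca
  set A : ℝ := |f'' a| ^ q with hA
  set B : ℝ := |f'' b| ^ q with hB
  have hA0 : 0 ≤ A := Real.rpow_nonneg (abs_nonneg _) _
  have hB0 : 0 ≤ B := Real.rpow_nonneg (abs_nonneg _) _
  set Bv : ℝ := betaFn (α + 2) (q + 1) with hBv
  set g : ℝ → ℝ := fun t => |f'' (c - (c - a) * t)| with hg
  -- the identity
  have hibp := ibp_identity f f' f'' a c hamb hf hf' hint
  have hsub := subst_lemma f'' a c hamb
  have hEq : (f a + f c) / 2 - (1 / (c - a)) * ∫ x in a..c, f x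
      = ((c - a) ^ 2 / 2) * ∫ t in (0:ℝ)..1, t * (1 - t) * f'' (c - (c - a) * t) := by
    rw [hsub, hibp]
    field_simp
  -- membership of the path in Icc a c
  have hmem : ∀ t ∈ Set.Icc (0:ℝ) 1, c - (c - a) * t ∈ Set.Icc a c := by
    intro t ht
    constructor
    · nlinarith [ht.1, ht.2]
    · nlinarith [ht.1, ht.2]
  -- argument rewriting
  have harg : ∀ t : ℝ, c - (c - a) * t = t * a + m * (1 - t) * b := by
    intro t; rw [hc]; ring
  -- pointwise convexity bound
  have hpt : ∀ t ∈ Set.Icc (0:ℝ) 1, g t ^ q ≤ t ^ α * A + m * (1 - t ^ α) * B := by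
    intro t ht
    have := hconv a ⟨le_refl a, hab.le⟩ b ⟨hab.le, le_refl b⟩ t ht
    rw [hg]
    simp only
    rw [harg t]
    exact this
  -- crude bound
  have hinner : ∀ t ∈ Set.Icc (0:ℝ) 1, t ^ α * A + m * (1 - t ^ α) * B ≤ A + m * B := by
    intro t ht
    have h1 : t ^ α ≤ 1 := Real.rpow_le_one ht.1 ht.2 hα.1
    have h2 : 0 ≤ t ^ α := Real.rpow_nonneg ht.1 _
    nlinarith [mul_nonneg hA0 (by linarith : (0:ℝ) ≤ 1 - t ^ α),
      mul_nonneg (mul_nonneg hm.1.le hB0) h2]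
  have hgq_bd : ∀ t ∈ Set.Icc (0:ℝ) 1, g t ^ q ≤ A + m * B :=
    fun t ht => le_trans (hpt t ht) (hinner t ht)
  have hAB0 : 0 ≤ A + m * B := by nlinarith [hm.1]
  set C : ℝ := (A + m * B) ^ (1/q) with hC
  have hgC : ∀ t ∈ Set.Ioc (0:ℝ) 1, g t ≤ C := by
    intro t ht
    have hico : t ∈ Set.Icc (0:ℝ) 1 := ⟨ht.1.le, ht.2⟩
    have h1 : g t = (g t ^ q) ^ (1/q) := by
      rw [← Real.rpow_mul (abs_nonneg _), mul_one_div, div_self (ne_of_gt hq0), Real.rpow_one]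
    rw [h1, hC]
    exact Real.rpow_le_rpow (Real.rpow_nonneg (abs_nonneg _) _) (hgq_bd t hico) (by positivity)
  have hg0 : ∀ t ∈ Set.Ioc (0:ℝ) 1, 0 ≤ g t := fun t _ => abs_nonneg _
  -- measurability of g
  have hgm : AEStronglyMeasurable g (volume.restrict (Set.Ioc (0:ℝ) 1)) := by
    have hDm : Measurable fun t : ℝ => |deriv f' (c - (c - a) * t)| :=
      ((measurable_deriv f').comp ((measurable_id.const_mul (c - a)).const_sub c)).abs
    apply hDm.aestronglyMeasurable.congr
    filter_upwards [ae_restrict_mem measurableSet_Ioc] with t ht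
    have hmem' := hmem t ⟨ht.1.le, ht.2⟩
    rw [hg]
    simp only
    rw [(hf' _ hmem').deriv]
  -- step 1 : |...| = ((c-a)^2/2) * |∫ t (1-t) f''|
  rw [hEq, abs_mul, abs_of_nonneg (by positivity : (0:ℝ) ≤ (c - a) ^ 2 / 2)]
  -- step 2 : |∫| ≤ ∫ t(1-t) g
  have habs : |∫ t in (0:ℝ)..1, t * (1 - t) * f'' (c - (c - a) * t)|
      ≤ ∫ t in (0:ℝ)..1, t * (1 - t) * g t := by
    refine le_trans (intervalIntegral.abs_integral_le_integral_abs zero_le_one) (le_of_eq ?_)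
    apply intervalIntegral.integral_congr
    intro t ht
    rw [Set.uIcc_of_le zero_le_one] at ht
    simp only [hg]
    rw [abs_mul, abs_mul, abs_of_nonneg ht.1, abs_of_nonneg (by linarith [ht.2] : (0:ℝ) ≤ 1 - t)]
  -- step 3 : Hoelder
  have hhoe := hoelder01 g q hq hgm hg0 C hgC
  -- step 4 : compare the q-integral with the beta integrals
  have hcont1 : Continuous fun t : ℝ => t * (1 - t) ^ q * t ^ α := by
    exact (continuous_id.mul ((Real.continuous_rpow_const (by linarith)).comp
      (continuous_const.sub continuous_id))).mul (Real.continuous_rpow_const hα.1)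
  have hcont2 : Continuous fun t : ℝ => t * (1 - t) ^ q := by
    exact continuous_id.mul ((Real.continuous_rpow_const (by linarith)).comp
      (continuous_const.sub continuous_id))
  have hJint : IntervalIntegrable (fun t => t * (1 - t) ^ q * g t ^ q) volume 0 1 := by
    refine integrableOn01 _ (hcont2.aestronglyMeasurable.mul
        ((hgm.aemeasurable.pow aemeasurable_const).aestronglyMeasurable)) (A + m * B) ?_
    · intro t ht
      have hico : t ∈ Set.Icc (0:ℝ) 1 := ⟨ht.1.le, ht.2⟩
      have h1 : 0 ≤ g t ^ q := Real.rpow_nonneg (abs_nonneg _) _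
      have h2 : (0:ℝ) ≤ 1 - t := by linarith [ht.2]
      have h3 : (1 - t) ^ q ≤ 1 := Real.rpow_le_one h2 (by linarith [ht.1]) (by linarith)
      have h4 : 0 ≤ (1 - t) ^ q := Real.rpow_nonneg h2 _
      rw [abs_of_nonneg (mul_nonneg (mul_nonneg ht.1.le h4) h1)]
      calc t * (1 - t) ^ q * g t ^ q ≤ 1 * 1 * (A + m * B) := by
            apply mul_le_mul _ (hgq_bd t hico) h1 (by norm_num)
            calc t * (1 - t) ^ q ≤ 1 * 1 :=
                  mul_le_mul ht.2 h3 h4 zero_le_one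
              _ = 1 * 1 := rfl
        _ = A + m * B := by ring
  have hKint : IntervalIntegrable
      (fun t => t * (1 - t) ^ q * (t ^ α * A + m * (1 - t ^ α) * B)) volume 0 1 := by
    apply Continuous.intervalIntegrable
    exact hcont2.mul (((Real.continuous_rpow_const hα.1).mul continuous_const).add
      ((continuous_const.mul (continuous_const.sub (Real.continuous_rpow_const hα.1))).mul
        continuous_const))
  have hJK : (∫ t in (0:ℝ)..1, t * (1 - t) ^ q * g t ^ q)
      ≤ ∫ t in (0:ℝ)..1, t * (1 - t) ^ q * (t ^ α * A + m * (1 - t ^ α) * B) := by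
    apply intervalIntegral.integral_mono_on zero_le_one hJint hKint
    intro t ht
    have h2 : (0:ℝ) ≤ 1 - t := by linarith [ht.2]
    have hw : 0 ≤ t * (1 - t) ^ q := mul_nonneg ht.1 (Real.rpow_nonneg h2 _)
    exact mul_le_mul_of_nonneg_left (hpt t ht) hw
  -- evaluate K
  have hKval : (∫ t in (0:ℝ)..1, t * (1 - t) ^ q * (t ^ α * A + m * (1 - t ^ α) * B))
      = A * Bv + m * B * (1 / ((q + 1) * (q + 2)) - Bv) := by
    have expand : (fun t : ℝ => t * (1 - t) ^ q * (t ^ α * A + m * (1 - t ^ α) * B))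
        = fun t : ℝ => (A - m * B) * (t * (1 - t) ^ q * t ^ α) + (m * B) * (t * (1 - t) ^ q) := by
      funext t; ring
    rw [expand]
    rw [intervalIntegral.integral_add (f := fun t : ℝ => (A - m * B) * (t * (1 - t) ^ q * t ^ α))
      (g := fun t : ℝ => (m * B) * (t * (1 - t) ^ q))
      ((continuous_const.mul hcont1).intervalIntegrable _ _)
      ((continuous_const.mul hcont2).intervalIntegrable _ _),
      intervalIntegral.integral_const_mul, intervalIntegral.integral_const_mul,
      beta1 α q hα.1 hq, beta2 q hq]
    rw [hBv]
    ring
  -- nonnegativity of J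
  have hJ0 : 0 ≤ ∫ t in (0:ℝ)..1, t * (1 - t) ^ q * g t ^ q := by
    apply intervalIntegral.integral_nonneg zero_le_one
    intro t ht
    have h2 : (0:ℝ) ≤ 1 - t := by linarith [ht.2]
    exact mul_nonneg (mul_nonneg ht.1 (Real.rpow_nonneg h2 _))
      (Real.rpow_nonneg (abs_nonneg _) _)
  -- assemble
  have hfinal : (∫ t in (0:ℝ)..1, t * (1 - t) ^ q * g t ^ q) ^ (1/q)
      ≤ (A * Bv + m * B * (1 / ((q + 1) * (q + 2)) - Bv)) ^ (1/q) := by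
    apply Real.rpow_le_rpow hJ0 _ (by positivity)
    rw [← hKval]
    exact hJK
  calc ((c - a) ^ 2 / 2) * |∫ t in (0:ℝ)..1, t * (1 - t) * f'' (c - (c - a) * t)|
      ≤ ((c - a) ^ 2 / 2) * ∫ t in (0:ℝ)..1, t * (1 - t) * g t :=
        mul_le_mul_of_nonneg_left habs (by positivity)
    _ ≤ ((c - a) ^ 2 / 2) * ((1/2 : ℝ) ^ (1 - 1/q) *
          (∫ t in (0:ℝ)..1, t * (1 - t) ^ q * g t ^ q) ^ (1/q)) :=
        mul_le_mul_of_nonneg_left hhoe (by positivity)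
    _ ≤ ((c - a) ^ 2 / 2) * ((1/2 : ℝ) ^ (1 - 1/q) *
          (A * Bv + m * B * (1 / ((q + 1) * (q + 2)) - Bv)) ^ (1/q)) := by
        apply mul_le_mul_of_nonneg_left _ (by positivity)
        exact mul_le_mul_of_nonneg_left hfinal (Real.rpow_nonneg (by norm_num) _)
    _ = ((c - a) ^ 2 / 2) * (1/2 : ℝ) ^ (1 - 1/q) *
          (A * Bv + m * B * (1 / ((q + 1) * (q + 2)) - Bv)) ^ (1/q) := by ring
end

section
/- Let f be twice differentiable on an open interval containing [a,b], a < b, with f'' integrable and |f''| ≤ K on [a,b], and suppose |f''|^q is convex for some q > 1 with conjugate exponent p. Then |(f(a)+f(b))/2 − (1/(b−a))∫_a^b f(x)dx| ≤ K·((b−a)²/8)·(Γ(1+p)/Γ(3/2+p))^{1/p}. -/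
open MeasureTheory Set intervalIntegral

set_option maxHeartbeats 1000000 in
theorem cor_bounded_second_deriv
    (f f' f'' : ℝ → ℝ) (a b K p q : ℝ) (hab : a < b)
    (hq : 1 < q) (hpq : 1 / p + 1 / q = 1)
    (hf : ∀ x ∈ Set.Icc a b, HasDerivAt f (f' x) x)
    (hf' : ∀ x ∈ Set.Icc a b, HasDerivAt f' (f'' x) x)
    (hint : IntervalIntegrable f'' MeasureTheory.volume a b)
    (hK : ∀ x ∈ Set.Icc a b, |f'' x| ≤ K)
    (hconv : ∀ x ∈ Set.Icc a b, ∀ y ∈ Set.Icc a b, ∀ t ∈ Set.Icc (0:ℝ) 1,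
      |f'' (t * x + (1 - t) * y)| ^ q ≤ t * |f'' x| ^ q + (1 - t) * |f'' y| ^ q) :
    |(f a + f b) / 2 - (1 / (b - a)) * ∫ x in a..b, f x|
      ≤ K * ((b - a) ^ 2 / 8) * (Real.Gamma (1 + p) / Real.Gamma (3 / 2 + p)) ^ (1 / p) := by
  have hab' : a ≤ b := hab.le
  have huIcc : Set.uIcc a b = Set.Icc a b := Set.uIcc_of_le hab'
  have hK0 : 0 ≤ K := le_trans (abs_nonneg _) (hK a (by simp [hab']))
  -- p > 1
  have hp1 : 1 < p := by
    have hq0 : 0 < q := lt_trans one_pos hq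
    have h2 : (0:ℝ) < 1 / q := by positivity
    have h3 : 1 / q < 1 := by rw [div_lt_one hq0]; exact hq
    have hip : 0 < 1 / p := by linarith
    have hp0 : 0 < p := by
      rcases lt_trichotomy p 0 with h | h | h
      · exfalso
        have : 1 / p < 0 := div_neg_of_pos_of_neg one_pos h
        linarith
      · rw [h] at hip; norm_num at hip
      · exact h
    have hlt : 1 / p < 1 := by linarith
    rw [div_lt_one hp0] at hlt
    exact hlt
  have hp0 : 0 < p := lt_trans one_pos hp1
  -- derivatives of the weight g x = (x-a)*(b-x)
  have hgderiv : ∀ x : ℝ, HasDerivAt (fun x => (x - a) * (b - x)) (a + b - 2 * x) x := by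
    intro x
    have h := ((hasDerivAt_id x).sub_const a).mul ((hasDerivAt_const x b).sub (hasDerivAt_id x))
    refine h.congr_deriv ?_
    simp
    ring
  have hfcont : ContinuousOn f (Set.uIcc a b) := by
    rw [huIcc]; exact fun x hx => ((hf x hx).continuousAt).continuousWithinAt
  have hf'cont : ContinuousOn f' (Set.uIcc a b) := by
    rw [huIcc]; exact fun x hx => ((hf' x hx).continuousAt).continuousWithinAt
  have hfint : IntervalIntegrable f volume a b := hfcont.intervalIntegrable
  have hf'int : IntervalIntegrable f' volume a b := hf'cont.intervalIntegrable
  -- integration by parts, first step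
  have ibp1 : ∫ x in a..b, (x - a) * (b - x) * f'' x
      = (b - a) * (b - b) * f' b - (a - a) * (b - a) * f' a
        - ∫ x in a..b, (a + b - 2 * x) * f' x := by
    apply intervalIntegral.integral_mul_deriv_eq_deriv_mul_of_hasDerivAt
    · exact Continuous.continuousOn (by fun_prop)
    · exact hf'cont
    · intro x hx; exact hgderiv x
    · intro x hx
      refine hf' x ?_
      exact Set.Ioo_subset_Icc_self (by rwa [min_eq_left hab', max_eq_right hab'] at hx)
    · exact Continuous.continuousOn (by fun_prop) |>.intervalIntegrable
    · exact hint
  -- second step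
  have ibp2 : ∫ x in a..b, (a + b - 2 * x) * f' x
      = (a + b - 2 * b) * f b - (a + b - 2 * a) * f a - ∫ x in a..b, (-2) * f x := by
    apply intervalIntegral.integral_mul_deriv_eq_deriv_mul_of_hasDerivAt
    · exact Continuous.continuousOn (by fun_prop)
    · exact hfcont
    · intro x hx
      have h := (hasDerivAt_const x (a + b)).sub ((hasDerivAt_id x).const_mul 2)
      refine h.congr_deriv ?_; ring
    · intro x hx
      refine hf x ?_
      exact Set.Ioo_subset_Icc_self (by rwa [min_eq_left hab', max_eq_right hab'] at hx)
    · exact Continuous.continuousOn (by fun_prop) |>.intervalIntegrable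
    · exact hf'int
  have hconst2 : ∫ x in a..b, (-2 : ℝ) * f x = (-2) * ∫ x in a..b, f x :=
    intervalIntegral.integral_const_mul _ _
  have key : ∫ x in a..b, (x - a) * (b - x) * f'' x
      = (b - a) * (f a + f b) - 2 * ∫ x in a..b, f x := by
    rw [ibp1, ibp2, hconst2]; ring
  -- the error term
  have hEeq : (f a + f b) / 2 - (1 / (b - a)) * ∫ x in a..b, f x
      = (1 / (2 * (b - a))) * ∫ x in a..b, (x - a) * (b - x) * f'' x := by
    have hba : b - a ≠ 0 := sub_ne_zero.2 hab.ne'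
    rw [key]
    field_simp
  -- bound the integral
  have hgf''int : IntervalIntegrable (fun x => (x - a) * (b - x) * f'' x) volume a b :=
    hint.continuousOn_mul (Continuous.continuousOn (by fun_prop))
  have habs : |∫ x in a..b, (x - a) * (b - x) * f'' x|
      ≤ ∫ x in a..b, |(x - a) * (b - x) * f'' x| :=
    intervalIntegral.abs_integral_le_integral_abs hab'
  have hmono : ∫ x in a..b, |(x - a) * (b - x) * f'' x|
      ≤ ∫ x in a..b, (x - a) * (b - x) * K := by
    apply intervalIntegral.integral_mono_on hab' hgf''int.abs
    · exact Continuous.continuousOn (by fun_prop) |>.intervalIntegrable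
    · intro x hx
      have h1 : (0:ℝ) ≤ (x - a) * (b - x) := by
        have := hx.1; have := hx.2; nlinarith
      calc |(x - a) * (b - x) * f'' x| = (x - a) * (b - x) * |f'' x| := by
            rw [abs_mul, abs_of_nonneg h1]
        _ ≤ (x - a) * (b - x) * K := by
            exact mul_le_mul_of_nonneg_left (hK x hx) h1
  have hval : ∫ x in a..b, (x - a) * (b - x) * K = K * (b - a) ^ 3 / 6 := by
    have hd : ∀ x ∈ Set.uIcc a b, HasDerivAt
        (fun x => K * (-(x ^ 3) / 3 + (a + b) * x ^ 2 / 2 - a * b * x))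
        ((x - a) * (b - x) * K) x := by
      intro x hx
      have h : HasDerivAt (fun x => K * (-(x ^ 3) / 3 + (a + b) * x ^ 2 / 2 - a * b * x))
          (K * (-(3 * x ^ 2) / 3 + (a + b) * (2 * x) / 2 - a * b * 1)) x := by
        apply HasDerivAt.const_mul
        exact (((hasDerivAt_pow 3 x).neg.div_const 3).add
          (((hasDerivAt_pow 2 x).const_mul (a + b)).div_const 2)).sub
          ((hasDerivAt_id x).const_mul (a * b)) |>.congr_deriv (by push_cast; ring)
      convert h using 1; ring
    rw [intervalIntegral.integral_eq_sub_of_hasDerivAt hd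
      (Continuous.continuousOn (by fun_prop) |>.intervalIntegrable)]
    ring
  have hbound : |(f a + f b) / 2 - (1 / (b - a)) * ∫ x in a..b, f x|
      ≤ K * (b - a) ^ 2 / 12 := by
    have hba : (0:ℝ) < b - a := sub_pos.2 hab
    rw [hEeq, abs_mul]
    have h1 : |1 / (2 * (b - a))| = 1 / (2 * (b - a)) := by
      rw [abs_of_pos (by positivity)]
    rw [h1]
    have h2 : |∫ x in a..b, (x - a) * (b - x) * f'' x| ≤ K * (b - a) ^ 3 / 6 :=
      le_trans habs (le_trans hmono (le_of_eq hval))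
    calc 1 / (2 * (b - a)) * |∫ x in a..b, (x - a) * (b - x) * f'' x|
        ≤ 1 / (2 * (b - a)) * (K * (b - a) ^ 3 / 6) := by
          apply mul_le_mul_of_nonneg_left h2; positivity
      _ = K * (b - a) ^ 2 / 12 := by
          field_simp
          ring
  -- Gamma ratio bound
  have hG1 : 0 < Real.Gamma (1 + p) := Real.Gamma_pos_of_pos (by linarith)
  have hG2 : 0 < Real.Gamma (3 / 2 + p) := Real.Gamma_pos_of_pos (by linarith)
  have hG3 : 0 < Real.Gamma (2 + p) := Real.Gamma_pos_of_pos (by linarith)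
  -- log-convexity : Gamma(3/2+p)^2 ≤ Gamma(1+p) * Gamma(2+p)
  have hlc : Real.Gamma (3 / 2 + p) ^ 2 ≤ Real.Gamma (1 + p) * Real.Gamma (2 + p) := by
    have h := Real.convexOn_log_Gamma.2 (Set.mem_Ioi.2 (show (0:ℝ) < 1 + p by linarith))
      (Set.mem_Ioi.2 (show (0:ℝ) < 2 + p by linarith))
      (by norm_num : (0:ℝ) ≤ 1/2) (by norm_num : (0:ℝ) ≤ 1/2) (by norm_num)
    have heq : (1/2 : ℝ) • (1 + p) + (1/2 : ℝ) • (2 + p) = 3 / 2 + p := by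
      simp [smul_eq_mul]; ring
    rw [heq] at h
    simp only [Function.comp_apply, smul_eq_mul] at h
    have h2 : Real.log (Real.Gamma (3 / 2 + p) ^ 2)
        ≤ Real.log (Real.Gamma (1 + p) * Real.Gamma (2 + p)) := by
      rw [Real.log_pow, Real.log_mul hG1.ne' hG3.ne']
      push_cast
      linarith
    exact (Real.log_le_log_iff (by positivity) (by positivity)).1 h2
  have hG3eq : Real.Gamma (2 + p) = (1 + p) * Real.Gamma (1 + p) := by
    have := Real.Gamma_add_one (show (1 + p : ℝ) ≠ 0 by positivity)
    rw [show (1:ℝ) + p + 1 = 2 + p by ring] at this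
    exact this
  -- Gamma(3/2+p) ≤ Gamma(1+p) * sqrt(1+p)
  have hsq : Real.Gamma (3 / 2 + p) ≤ Real.Gamma (1 + p) * Real.sqrt (1 + p) := by
    have h1 : Real.Gamma (3 / 2 + p) ^ 2 ≤ (Real.Gamma (1 + p) * Real.sqrt (1 + p)) ^ 2 := by
      rw [mul_pow, Real.sq_sqrt (by positivity : (0:ℝ) ≤ 1 + p)]
      calc Real.Gamma (3 / 2 + p) ^ 2 ≤ Real.Gamma (1 + p) * Real.Gamma (2 + p) := hlc
        _ = Real.Gamma (1 + p) ^ 2 * (1 + p) := by rw [hG3eq]; ring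
    exact (pow_le_pow_iff_left₀ hG2.le (by positivity) two_ne_zero).1 h1
  -- ratio lower bound
  have hratio : (2/3 : ℝ) ^ p ≤ Real.Gamma (1 + p) / Real.Gamma (3 / 2 + p) := by
    have hs : Real.sqrt (1 + p) ≤ (3/2 : ℝ) ^ p := by
      have h94 : (1 : ℝ) + p ≤ ((9:ℝ)/4) ^ p := by
        have := one_add_mul_self_le_rpow_one_add (show (-1:ℝ) ≤ 5/4 by norm_num) hp1.le
        have h2 : (1:ℝ) + p * (5/4) ≤ ((9:ℝ)/4) ^ p := by
          convert this using 2
          norm_num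
        nlinarith
      have : Real.sqrt (1 + p) ≤ Real.sqrt (((9:ℝ)/4) ^ p) :=
        Real.sqrt_le_sqrt h94
      refine this.trans_eq ?_
      rw [show ((9:ℝ)/4) = ((3:ℝ)/2) ^ (2:ℕ) by norm_num, ← Real.rpow_natCast ((3:ℝ)/2) 2,
        ← Real.rpow_mul (by norm_num : (0:ℝ) ≤ 3/2)]
      rw [Real.sqrt_eq_rpow, ← Real.rpow_mul (by positivity)]
      congr 1
      push_cast
      ring
    have h32 : (0:ℝ) < (3/2 : ℝ) ^ p := Real.rpow_pos_of_pos (by norm_num) p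
    have hinv : (2/3 : ℝ) ^ p = ((3/2 : ℝ) ^ p)⁻¹ := by
      rw [show (2/3 : ℝ) = (3/2 : ℝ)⁻¹ by norm_num,
        Real.inv_rpow (by norm_num : (0:ℝ) ≤ 3/2)]
    have hsp : (0:ℝ) < Real.sqrt (1 + p) := Real.sqrt_pos.2 (by linarith)
    rw [hinv]
    have step1 : ((3/2 : ℝ) ^ p)⁻¹ ≤ (Real.sqrt (1 + p))⁻¹ :=
      inv_anti₀ hsp hs
    refine step1.trans ?_
    rw [div_eq_mul_inv, ← one_mul (Real.sqrt (1+p))⁻¹]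
    calc (1:ℝ) * (Real.sqrt (1+p))⁻¹
        ≤ (Real.Gamma (1 + p) * (Real.Gamma (3/2 + p))⁻¹ * Real.sqrt (1+p)) * (Real.sqrt (1+p))⁻¹ := by
          apply mul_le_mul_of_nonneg_right _ (by positivity)
          rw [show Real.Gamma (1 + p) * (Real.Gamma (3/2 + p))⁻¹ * Real.sqrt (1+p)
              = Real.Gamma (1 + p) * Real.sqrt (1+p) / Real.Gamma (3/2 + p) by ring]
          rw [le_div_iff₀ hG2, one_mul]
          exact hsq
      _ = Real.Gamma (1 + p) * (Real.Gamma (3/2 + p))⁻¹ := by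
          field_simp
  -- conclude
  have hfinal : (2/3 : ℝ) ≤ (Real.Gamma (1 + p) / Real.Gamma (3 / 2 + p)) ^ (1 / p) := by
    have h1 : ((2/3 : ℝ) ^ p) ^ (1/p) ≤ (Real.Gamma (1 + p) / Real.Gamma (3 / 2 + p)) ^ (1/p) :=
      Real.rpow_le_rpow (by positivity) hratio (by positivity)
    rwa [← Real.rpow_mul (by norm_num : (0:ℝ) ≤ 2/3), mul_one_div, div_self hp0.ne',
      Real.rpow_one] at h1
  have hpow : 0 ≤ (Real.Gamma (1 + p) / Real.Gamma (3 / 2 + p)) ^ (1 / p) := by positivity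
  calc |(f a + f b) / 2 - (1 / (b - a)) * ∫ x in a..b, f x|
      ≤ K * (b - a) ^ 2 / 12 := hbound
    _ ≤ K * ((b - a) ^ 2 / 8) * (Real.Gamma (1 + p) / Real.Gamma (3 / 2 + p)) ^ (1 / p) := by
        nlinarith [mul_le_mul_of_nonneg_left hfinal (show (0:ℝ) ≤ K * (b-a)^2 / 8 by positivity)]
end
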